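/- arXiv:2312.08538 — 4 statements merged into one kernel-verified Lean document; each statement's English description precedes it below -/
import Mathlib

section
/- Fix an integer s ≥ 1 and a nonzero vector e ∈ ℝ^d, and define the stochastic quantizer C(e) coordinatewise by C(e)_i = ||e||·sign(e_i)·ξ_i, where, letting l ∈ {0,1,…,s} be the integer with |e_i|/||e|| ∈ [l/s, (l+1)/s], the random variable ξ_i equals (l+1)/s with probability (|e_i|/||e||)·s − l and equals l/s otherwise, independently across coordinates. Then (i) E[C(e)] = e, and (ii) E[||C(e) − e||²] ≤ min{d/s², √d/s}·||e||². -/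
set_option maxHeartbeats 1000000
open MeasureTheory ProbabilityTheory
open scoped ENNReal

lemma qsgd_integrable_dirac {f : ℝ → ℝ} (x : ℝ) : Integrable f (Measure.dirac x) := by
  have h : f =ᵐ[Measure.dirac x] fun _ => f x := by
    rw [Filter.EventuallyEq]
    rw [MeasureTheory.ae_dirac_eq]; exact Filter.eventually_pure.2 rfl
  exact (integrable_const (f x)).congr h.symm

lemma qsgd_two_point_integrable (c1 c2 x y : ℝ) :
    Integrable (id : ℝ → ℝ)
      (ENNReal.ofReal c1 • Measure.dirac x + ENNReal.ofReal c2 • Measure.dirac y) :=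
  ((qsgd_integrable_dirac x).smul_measure ENNReal.ofReal_ne_top).add_measure
    ((qsgd_integrable_dirac y).smul_measure ENNReal.ofReal_ne_top)

lemma qsgd_two_point_integral (c1 c2 x y : ℝ) (h1 : 0 ≤ c1) (h2 : 0 ≤ c2) :
    ∫ z, z ∂(ENNReal.ofReal c1 • Measure.dirac x + ENNReal.ofReal c2 • Measure.dirac y)
      = c1 * x + c2 * y := by
  rw [integral_add_measure ((qsgd_integrable_dirac x).smul_measure ENNReal.ofReal_ne_top)
      ((qsgd_integrable_dirac y).smul_measure ENNReal.ofReal_ne_top),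
    integral_smul_measure, integral_smul_measure, integral_dirac, integral_dirac,
    ENNReal.toReal_ofReal h1, ENNReal.toReal_ofReal h2, smul_eq_mul, smul_eq_mul]

lemma qsgd_two_point_lintegral (c1 c2 x y : ℝ) (g : ℝ → ℝ≥0∞) :
    ∫⁻ z, g z ∂(ENNReal.ofReal c1 • Measure.dirac x + ENNReal.ofReal c2 • Measure.dirac y)
      = ENNReal.ofReal c1 * g x + ENNReal.ofReal c2 * g y := by
  rw [lintegral_add_measure, lintegral_smul_measure, lintegral_smul_measure,
    lintegral_dirac, lintegral_dirac, smul_eq_mul, smul_eq_mul]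

lemma qsgd_sign_mul_abs (x : ℝ) : Real.sign x * |x| = x := by
  rcases lt_trichotomy x 0 with h | h | h
  · rw [Real.sign_of_neg h, abs_of_neg h]; ring
  · simp [h]
  · rw [Real.sign_of_pos h, abs_of_pos h]; ring

/-- **Unbiasedness and variance of the stochastic quantizer (QSGD).**
Fix `s ≥ 1` and a nonzero `e ∈ ℝ^d`.  For each coordinate `i`, let
`l = ⌊(|e_i|/‖e‖)·s⌋` and let `ξ i` be a random variable equal to `(l+1)/s` with
probability `(|e_i|/‖e‖)·s - l` and to `l/s` otherwise, independently across
coordinates.  The quantizer `C(e)_i = ‖e‖ · sign(e_i) · ξ_i` satisfies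
`E[C(e)] = e` and `E[‖C(e) - e‖²] ≤ min{d/s², √d/s} · ‖e‖²`. -/
theorem stochastic_quantizer_unbiased_and_variance
    (d s : ℕ) (hs : 1 ≤ s)
    (e : EuclideanSpace ℝ (Fin d)) (he : e ≠ 0)
    {Ω : Type*} [MeasurableSpace Ω] (μ : Measure Ω) [IsProbabilityMeasure μ]
    (ξ : Fin d → Ω → ℝ) (hξmeas : ∀ i, Measurable (ξ i))
    (hξindep : iIndepFun ξ μ)
    (hξlaw : ∀ i : Fin d,
      Measure.map (ξ i) μ =
        ENNReal.ofReal (|e i| / ‖e‖ * s - ⌊|e i| / ‖e‖ * s⌋₊) •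
            Measure.dirac (((⌊|e i| / ‖e‖ * s⌋₊ : ℝ) + 1) / s)
          + ENNReal.ofReal (1 - (|e i| / ‖e‖ * s - ⌊|e i| / ‖e‖ * s⌋₊)) •
            Measure.dirac ((⌊|e i| / ‖e‖ * s⌋₊ : ℝ) / s))
    (Ce : Ω → EuclideanSpace ℝ (Fin d))
    (hCe : ∀ ω i, Ce ω i = ‖e‖ * Real.sign (e i) * ξ i ω) :
    (∫ ω, Ce ω ∂μ) = e ∧
      ∫⁻ ω, (‖Ce ω - e‖₊ : ℝ≥0∞) ^ 2 ∂μ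
        ≤ ENNReal.ofReal (min ((d : ℝ) / s ^ 2) (Real.sqrt d / s) * ‖e‖ ^ 2) := by
  have hn : (0:ℝ) < ‖e‖ := norm_pos_iff.mpr he
  have hs0 : (0:ℝ) < s := by exact_mod_cast Nat.pos_of_ne_zero (by omega)
  have hsne : (s:ℝ) ≠ 0 := ne_of_gt hs0
  have hT0 : ∀ i : Fin d, 0 ≤ |e i| / ‖e‖ * s :=
    fun i => mul_nonneg (div_nonneg (abs_nonneg _) hn.le) hs0.le
  have hp0 : ∀ i : Fin d, 0 ≤ |e i| / ‖e‖ * s - ⌊|e i| / ‖e‖ * s⌋₊ :=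
    fun i => sub_nonneg.mpr (Nat.floor_le (hT0 i))
  have hp1 : ∀ i : Fin d, |e i| / ‖e‖ * s - ⌊|e i| / ‖e‖ * s⌋₊ ≤ 1 := by
    intro i
    have := Nat.lt_floor_add_one (|e i| / ‖e‖ * s)
    push_cast at this
    linarith
  -- integrability and expectation of each ξ i
  have hint : ∀ i, Integrable (ξ i) μ := by
    intro i
    have h := (integrable_map_measure aestronglyMeasurable_id
      (hξmeas i).aemeasurable).mp (by rw [hξlaw i]; exact qsgd_two_point_integrable _ _ _ _)
    exact h
  have hEξ : ∀ i, ∫ ω, ξ i ω ∂μ = |e i| / ‖e‖ := by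
    intro i
    have h0 : ∫ ω, ξ i ω ∂μ = ∫ x, x ∂(μ.map (ξ i)) :=
      (integral_map (hξmeas i).aemeasurable aestronglyMeasurable_id).symm
    rw [h0, hξlaw i, qsgd_two_point_integral _ _ _ _ (hp0 i) (by linarith [hp1 i])]
    set F : ℝ := ((⌊|e i| / ‖e‖ * s⌋₊ : ℕ) : ℝ) with hF
    field_simp
    ring
  -- Part 1: unbiasedness
  have hbasis : ∀ x : EuclideanSpace ℝ (Fin d),
      ∑ i, (x i) • EuclideanSpace.single i (1:ℝ) = x := by
    intro x
    simpa [EuclideanSpace.basisFun_apply, EuclideanSpace.basisFun_repr] using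
      ((EuclideanSpace.basisFun (Fin d) ℝ).toBasis.sum_repr x)
  have h1 : (∫ ω, Ce ω ∂μ) = e := by
    have hrepr : (fun ω => Ce ω) = fun ω =>
        ∑ i, ξ i ω • ((‖e‖ * Real.sign (e i)) • EuclideanSpace.single i (1:ℝ)) := by
      funext ω
      rw [← hbasis (Ce ω)]
      refine Finset.sum_congr rfl fun i _ => ?_
      rw [hCe ω i, smul_smul, mul_comm]
    rw [hrepr]
    rw [integral_finset_sum _ (fun i _ => (hint i).smul_const _)]
    have hterm : ∀ i : Fin d, (∫ ω, ξ i ω • ((‖e‖ * Real.sign (e i)) • EuclideanSpace.single i (1:ℝ)) ∂μ)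
        = (e i) • EuclideanSpace.single i (1:ℝ) := by
      intro i
      rw [integral_smul_const, hEξ i, smul_smul]
      congr 1
      have h2 : |e i| / ‖e‖ * (‖e‖ * Real.sign (e i)) = Real.sign (e i) * |e i| := by
        field_simp
      rw [h2, qsgd_sign_mul_abs]
    simp_rw [hterm]
    exact hbasis e
  refine ⟨h1, ?_⟩
  -- Part 2: variance bound
  have hnormsq : ‖e‖ ^ 2 = ∑ i, (e i) ^ 2 := by
    rw [EuclideanSpace.norm_eq, Real.sq_sqrt (by positivity)]
    exact Finset.sum_congr rfl fun i _ => by rw [Real.norm_eq_abs, sq_abs]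
  have hsumabs : ∑ i, |e i| ≤ Real.sqrt d * ‖e‖ := by
    have hsq : (∑ i, |e i|) ^ 2 ≤ (d : ℝ) * ∑ i, (e i) ^ 2 := by
      have h := sq_sum_le_card_mul_sum_sq (s := (Finset.univ : Finset (Fin d)))
        (f := fun i : Fin d => |e i|)
      simpa [sq_abs] using h
    have h0 : 0 ≤ ∑ i, |e i| := Finset.sum_nonneg fun i _ => abs_nonneg _
    have h2 : (∑ i, |e i|) ^ 2 ≤ (Real.sqrt d * ‖e‖) ^ 2 := by
      rw [mul_pow, Real.sq_sqrt (Nat.cast_nonneg d), hnormsq]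
      exact hsq
    exact le_of_pow_le_pow_left₀ two_ne_zero (by positivity) h2
  have hnorm : ∀ ω, ((‖Ce ω - e‖₊ : ℝ≥0∞)) ^ 2
      = ∑ i, ENNReal.ofReal ((‖e‖ * Real.sign (e i) * ξ i ω - e i) ^ 2) := by
    intro ω
    have h2 : ‖Ce ω - e‖ ^ 2 = ∑ i, (‖e‖ * Real.sign (e i) * ξ i ω - e i) ^ 2 := by
      rw [EuclideanSpace.norm_eq, Real.sq_sqrt (by positivity)]
      refine Finset.sum_congr rfl fun i _ => ?_
      rw [PiLp.sub_apply, hCe ω i, Real.norm_eq_abs, sq_abs]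
    rw [← (show ENNReal.ofReal ‖Ce ω - e‖ = (‖Ce ω - e‖₊ : ℝ≥0∞) from ofReal_norm (Ce ω - e)), ← ENNReal.ofReal_pow (norm_nonneg _), h2,
      ENNReal.ofReal_sum_of_nonneg (fun i _ => by positivity)]
  have hmeas : ∀ i : Fin d,
      Measurable fun ω => ENNReal.ofReal ((‖e‖ * Real.sign (e i) * ξ i ω - e i) ^ 2) := by
    intro i
    exact (((measurable_const.mul (hξmeas i)).sub measurable_const).pow_const 2).ennreal_ofReal
  calc ∫⁻ ω, (‖Ce ω - e‖₊ : ℝ≥0∞) ^ 2 ∂μ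
      = ∑ i, ∫⁻ ω, ENNReal.ofReal ((‖e‖ * Real.sign (e i) * ξ i ω - e i) ^ 2) ∂μ := by
        simp_rw [hnorm]
        exact lintegral_finset_sum _ (fun i _ => hmeas i)
    _ ≤ ∑ i : Fin d, ENNReal.ofReal (‖e‖ ^ 2 *
          ((|e i| / ‖e‖ * s - ⌊|e i| / ‖e‖ * s⌋₊) * (1 - (|e i| / ‖e‖ * s - ⌊|e i| / ‖e‖ * s⌋₊)))
          / s ^ 2) := by
        refine Finset.sum_le_sum fun i _ => ?_
        have hg : Measurable fun x : ℝ => ENNReal.ofReal ((‖e‖ * Real.sign (e i) * x - e i) ^ 2) :=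
          (((measurable_const.mul measurable_id).sub measurable_const).pow_const 2).ennreal_ofReal
        have hmap : ∫⁻ ω, ENNReal.ofReal ((‖e‖ * Real.sign (e i) * ξ i ω - e i) ^ 2) ∂μ
            = ∫⁻ x, ENNReal.ofReal ((‖e‖ * Real.sign (e i) * x - e i) ^ 2) ∂(μ.map (ξ i)) :=
          (lintegral_map hg (hξmeas i)).symm
        rw [hmap, hξlaw i, qsgd_two_point_lintegral,
          ← ENNReal.ofReal_mul (hp0 i), ← ENNReal.ofReal_mul (by linarith [hp1 i]),
          ← ENNReal.ofReal_add (mul_nonneg (hp0 i) (sq_nonneg _))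
            (mul_nonneg (by linarith [hp1 i]) (sq_nonneg _))]
        apply ENNReal.ofReal_le_ofReal
        rcases eq_or_ne (e i) 0 with h0 | h0
        · simp [h0]
        · set A := |e i| with hA
          set F : ℝ := ((⌊A / ‖e‖ * s⌋₊ : ℕ) : ℝ) with hF
          apply le_of_eq
          rcases Real.sign_apply_eq_of_ne_zero (e i) h0 with hσ | hσ <;> rw [hσ]
          · have heA : e i = -A := by
              have := qsgd_sign_mul_abs (e i); rw [hσ] at this; rw [← hA] at this; linarith
            rw [heA]
            field_simp
            ring
          · have heA : e i = A := by
              have := qsgd_sign_mul_abs (e i); rw [hσ] at this; rw [← hA] at this; linarith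
            rw [heA]
            field_simp
            ring
    _ = ENNReal.ofReal (∑ i : Fin d, ‖e‖ ^ 2 *
          ((|e i| / ‖e‖ * s - ⌊|e i| / ‖e‖ * s⌋₊) * (1 - (|e i| / ‖e‖ * s - ⌊|e i| / ‖e‖ * s⌋₊)))
          / s ^ 2) := by
        rw [ENNReal.ofReal_sum_of_nonneg]
        intro i _
        have h1' := hp0 i
        have h2' := hp1 i
        have : 0 ≤ (|e i| / ‖e‖ * s - ⌊|e i| / ‖e‖ * s⌋₊) *
            (1 - (|e i| / ‖e‖ * s - ⌊|e i| / ‖e‖ * s⌋₊)) := mul_nonneg h1' (by linarith)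
        positivity
    _ ≤ ENNReal.ofReal (min ((d : ℝ) / s ^ 2) (Real.sqrt d / s) * ‖e‖ ^ 2) := by
        apply ENNReal.ofReal_le_ofReal
        rw [min_mul_of_nonneg _ _ (by positivity : (0:ℝ) ≤ ‖e‖ ^ 2)]
        apply le_min
        · calc ∑ i : Fin d, ‖e‖ ^ 2 *
                ((|e i| / ‖e‖ * s - ⌊|e i| / ‖e‖ * s⌋₊) * (1 - (|e i| / ‖e‖ * s - ⌊|e i| / ‖e‖ * s⌋₊)))
                / s ^ 2
              ≤ ∑ _i : Fin d, ‖e‖ ^ 2 / s ^ 2 := by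
                refine Finset.sum_le_sum fun i _ => ?_
                have h1' := hp0 i
                have h2' := hp1 i
                have hq : (|e i| / ‖e‖ * s - ⌊|e i| / ‖e‖ * s⌋₊) *
                    (1 - (|e i| / ‖e‖ * s - ⌊|e i| / ‖e‖ * s⌋₊)) ≤ 1 := by nlinarith
                calc ‖e‖ ^ 2 * ((|e i| / ‖e‖ * s - ⌊|e i| / ‖e‖ * s⌋₊) *
                      (1 - (|e i| / ‖e‖ * s - ⌊|e i| / ‖e‖ * s⌋₊))) / s ^ 2
                    ≤ ‖e‖ ^ 2 * 1 / s ^ 2 := by gcongr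
                  _ = ‖e‖ ^ 2 / s ^ 2 := by ring
            _ = (d : ℝ) / s ^ 2 * ‖e‖ ^ 2 := by
                rw [Finset.sum_const, Finset.card_univ, Fintype.card_fin, nsmul_eq_mul]
                ring
        · calc ∑ i : Fin d, ‖e‖ ^ 2 *
                ((|e i| / ‖e‖ * s - ⌊|e i| / ‖e‖ * s⌋₊) * (1 - (|e i| / ‖e‖ * s - ⌊|e i| / ‖e‖ * s⌋₊)))
                / s ^ 2
              ≤ ∑ i : Fin d, ‖e‖ * |e i| / s := by
                refine Finset.sum_le_sum fun i _ => ?_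
                have h1' := hp0 i
                have h2' := hp1 i
                have hple : (|e i| / ‖e‖ * s - ⌊|e i| / ‖e‖ * s⌋₊) *
                    (1 - (|e i| / ‖e‖ * s - ⌊|e i| / ‖e‖ * s⌋₊)) ≤ |e i| / ‖e‖ * s := by
                  have hfl : (0:ℝ) ≤ (⌊|e i| / ‖e‖ * s⌋₊ : ℝ) := Nat.cast_nonneg _
                  nlinarith
                calc ‖e‖ ^ 2 * ((|e i| / ‖e‖ * s - ⌊|e i| / ‖e‖ * s⌋₊) *
                      (1 - (|e i| / ‖e‖ * s - ⌊|e i| / ‖e‖ * s⌋₊))) / s ^ 2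
                    ≤ ‖e‖ ^ 2 * (|e i| / ‖e‖ * s) / s ^ 2 := by gcongr
                  _ = ‖e‖ * |e i| / s := by field_simp
            _ = ‖e‖ / s * ∑ i, |e i| := by rw [Finset.mul_sum]; exact Finset.sum_congr rfl fun i _ => by ring
            _ ≤ ‖e‖ / s * (Real.sqrt d * ‖e‖) := by gcongr
            _ = Real.sqrt d / s * ‖e‖ ^ 2 := by ring
end

section
/- Let C be a count sketch with v rows and w columns built from hash functions h_1,…,h_v : {1,…,d} → {1,…,w} and sign functions s_1,…,s_v : {1,…,d} → {+1,−1}, all chosen independently and uniformly at random, applied to e ∈ ℝ^d; let C(e) ∈ ℝ^d denote the vector of recovered estimates. Then (i) each single-row estimate is unbiased: E[s_i(p)·S_{i, h_i(p)}] = e_p for every row i and coordinate p; and (ii) there exist absolute constants c_1, c_2 > 0 such that for any ε > 0 and failure probability ρ ∈ (0,1), if w ≥ c_1/ε² and v ≥ c_2·log(d/ρ), then with probability at least 1 − ρ the recovered vector satisfies ||e − C(e)||_∞ ≤ ε||e||. -/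
open MeasureTheory ProbabilityTheory
open scoped ENNReal BigOperators

/-- The median of a list of reals: the middle element (upper middle for even length)
of the list sorted in increasing order. -/
noncomputable def listMedian (l : List ℝ) : ℝ :=
  (l.insertionSort (· ≤ ·)).getD (l.length / 2) 0

section helpers
variable {Ω : Type*} [MeasurableSpace Ω] {μ : Measure Ω}

lemma bdd_integrable [IsFiniteMeasure μ] {f : Ω → ℝ} (hf : Measurable f) (C : ℝ)
    (h : ∀ ω, |f ω| ≤ C) : Integrable f μ :=
  (integrable_const C).mono' hf.aestronglyMeasurable
    (Filter.Eventually.of_forall (by simpa using h))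

lemma sign_integral_zero [IsProbabilityMeasure μ] {f : Ω → ℝ} (hm : Measurable f)
    (h1 : μ {ω | f ω = 1} = 2⁻¹) (h2 : μ {ω | f ω = -1} = 2⁻¹)
    (hpm : ∀ ω, f ω = 1 ∨ f ω = -1) : ∫ ω, f ω ∂μ = 0 := by
  have hA : MeasurableSet {ω | f ω = 1} := hm (measurableSet_singleton 1)
  have hB : MeasurableSet {ω | f ω = -1} := hm (measurableSet_singleton (-1))
  have hf : f = fun ω => Set.indicator {ω | f ω = 1} (fun _ => (1:ℝ)) ω
      - Set.indicator {ω | f ω = -1} (fun _ => (1:ℝ)) ω := by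
    funext ω
    rcases hpm ω with h | h <;> simp [Set.indicator_apply, h] <;> norm_num
  rw [hf, integral_sub ((integrable_const (1:ℝ)).indicator hA)
    ((integrable_const (1:ℝ)).indicator hB)]
  rw [integral_indicator_const _ hA, integral_indicator_const _ hB, measureReal_def, measureReal_def, h1, h2]
  simp

lemma indep_single_tuple {ι : Type*} {β : ι → Type*} {mβ : ∀ i, MeasurableSpace (β i)}
    {F : ∀ i, Ω → β i} (hIndep : iIndepFun (m := mβ) F μ) (hmeas : ∀ i, Measurable (F i))
    (s₀ : ι) (T : Finset ι) (hs₀ : s₀ ∉ T) {γ : Type*} [MeasurableSpace γ]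
    (φ : (∀ t : T, β t) → γ) (hφ : Measurable φ) :
    IndepFun (F s₀) (fun ω => φ (fun t => F t ω)) μ := by
  have h := hIndep.indepFun_finset {s₀} T (Finset.disjoint_singleton_left.mpr hs₀) hmeas
  exact h.comp (φ := fun x : (∀ i : ({s₀} : Finset ι), β i) =>
    x ⟨s₀, Finset.mem_singleton_self s₀⟩) (measurable_pi_apply _) hφ

end helpers

lemma countP_ofFn {n : ℕ} (g : Fin n → ℝ) (P : ℝ → Bool) :
    (List.ofFn g).countP P = (Finset.univ.filter (fun i => P (g i))).card := by
  rw [List.ofFn_eq_map, List.countP_map, List.countP_eq_length_filter]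
  simp [Fin.univ_def, Finset.filter, Finset.card, Multiset.filter_coe, Function.comp]
  rfl

/-- The index type for the count sketch random sources. -/
abbrev CSIdx (v d : ℕ) := (Fin v × Fin d) ⊕ (Fin v × Fin d)

/-- The value family for the count sketch random sources. -/
abbrev CSVal (v d w : ℕ) (s : CSIdx v d) : Type := Sum.elim (fun _ => Fin w) (fun _ => ℝ) s

instance csValMS {v d w : ℕ} : ∀ s : CSIdx v d, MeasurableSpace (CSVal v d w s) :=
  fun s => match s with
  | .inl _ => (inferInstance : MeasurableSpace (Fin w))
  | .inr _ => (inferInstance : MeasurableSpace ℝ)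

/-- Accessor for the hash component of a tuple of sources. -/
def getHx {v d w : ℕ} {T : Finset (CSIdx v d)} (a : Fin v × Fin d) (h : Sum.inl a ∈ T)
    (x : ∀ t : T, CSVal v d w (t : CSIdx v d)) : Fin w := x ⟨Sum.inl a, h⟩

/-- Accessor for the sign component of a tuple of sources. -/
def getSx {v d w : ℕ} {T : Finset (CSIdx v d)} (a : Fin v × Fin d) (h : Sum.inr a ∈ T)
    (x : ∀ t : T, CSVal v d w (t : CSIdx v d)) : ℝ := x ⟨Sum.inr a, h⟩

lemma measurable_getHx {v d w : ℕ} {T : Finset (CSIdx v d)} (a : Fin v × Fin d)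
    (h : Sum.inl a ∈ T) : Measurable (getHx (w := w) a h) := measurable_pi_apply _

lemma measurable_getSx {v d w : ℕ} {T : Finset (CSIdx v d)} (a : Fin v × Fin d)
    (h : Sum.inr a ∈ T) : Measurable (getSx (w := w) a h) := measurable_pi_apply _

lemma listMedian_zero {l : List ℝ} (h : ∀ x ∈ l, x = 0) : listMedian l = 0 := by
  rw [listMedian]
  rcases lt_or_ge (l.length / 2) (l.insertionSort (· ≤ ·)).length with hlt | hge
  · rw [List.getD_eq_getElem _ _ hlt]
    exact h _ ((List.perm_insertionSort _ l).mem_iff.mp (List.getElem_mem hlt))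
  · exact List.getD_eq_default _ _ hge

lemma listMedian_close (l : List ℝ) (m t : ℝ)
    (h : l.length < 2 * l.countP (fun x => decide (|x - m| ≤ t))) :
    |listMedian l - m| ≤ t := by
  classical
  set P : ℝ → Bool := fun x => decide (|x - m| ≤ t) with hP
  set l' := l.insertionSort (· ≤ ·) with hl'
  have hperm : l'.Perm l := List.perm_insertionSort _ l
  have hsorted : l'.Pairwise (· ≤ ·) := List.pairwise_insertionSort _ l
  have hlen : l'.length = l.length := hperm.length_eq
  have hcount : l'.countP P = l.countP P := hperm.countP_eq P
  have hlpos : 0 < l.length := by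
    have := List.countP_le_length (p := P) (l := l)
    omega
  set k := l.length / 2 with hk
  have hklt : k < l'.length := by omega
  have hmed : listMedian l = l'.get ⟨k, hklt⟩ := by
    rw [listMedian, List.getD_eq_getElem _ _ hklt]
    rfl
  set med := l'.get ⟨k, hklt⟩ with hmdef
  rw [hmed, abs_sub_le_iff]
  constructor
  · -- med - m ≤ t, i.e. med ≤ m + t
    by_contra hc
    push_neg at hc
    -- all elements from index k on are > m + t
    have hdrop : ∀ x ∈ l'.drop k, P x = false := by
      intro x hx
      obtain ⟨j, hj, hxe⟩ := List.mem_iff_getElem.mp hx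
      rw [List.getElem_drop] at hxe
      have : med ≤ x := by
        rw [← hxe, hmdef]
        exact hsorted.rel_get_of_le (by simp)
      have : t < x - m := by linarith
      simp only [hP, decide_eq_false_iff_not, not_le]
      calc t < x - m := this
      _ ≤ |x - m| := le_abs_self _
    have h1 : l'.countP P = (l'.take k).countP P + (l'.drop k).countP P := by
      rw [← List.countP_append, List.take_append_drop]
    have h2 : (l'.drop k).countP P = 0 := by
      rw [List.countP_eq_zero]
      intro x hx; simp [hdrop x hx]
    have h3 : (l'.take k).countP P ≤ k := by
      calc (l'.take k).countP P ≤ (l'.take k).length := List.countP_le_length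
      _ ≤ k := by simp
    omega
  · -- m - med ≤ t, i.e. m - t ≤ med
    by_contra hc
    push_neg at hc
    have htake : ∀ x ∈ l'.take (k+1), P x = false := by
      intro x hx
      obtain ⟨j, hj, hxe⟩ := List.mem_iff_getElem.mp hx
      rw [List.getElem_take] at hxe
      have hjlt : j < l'.length := by
        have := (List.length_take : (l'.take (k+1)).length = _)
        omega
      have : x ≤ med := by
        rw [← hxe, hmdef]
        have : l'.get ⟨j, hjlt⟩ ≤ l'.get ⟨k, hklt⟩ := by
          apply hsorted.rel_get_of_le
          simp only [Fin.mk_le_mk]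
          have := (List.length_take : (l'.take (k+1)).length = _)
          omega
        convert this using 2
        rfl
      have : x - m < -t := by linarith
      simp only [hP, decide_eq_false_iff_not, not_le]
      calc t < -(x - m) := by linarith
      _ ≤ |x - m| := neg_le_abs _
    have h1 : l'.countP P = (l'.take (k+1)).countP P + (l'.drop (k+1)).countP P := by
      rw [← List.countP_append, List.take_append_drop]
    have h2 : (l'.take (k+1)).countP P = 0 := by
      rw [List.countP_eq_zero]
      intro x hx; simp [htake x hx]
    have h3 : (l'.drop (k+1)).countP P ≤ l.length - (k+1) := by
      calc (l'.drop (k+1)).countP P ≤ (l'.drop (k+1)).length := List.countP_le_length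
      _ ≤ l.length - (k+1) := by simp [hlen]
    omega

/-- **Count sketch: unbiasedness and ℓ∞ recovery guarantee.**
A count sketch of `e ∈ ℝ^d` with `v` rows and `w` columns is built from hash functions
`H i : {1..d} → {1..w}` (uniform) and sign functions `Sg i : {1..d} → {±1}` (uniform),
all mutually independent; row `i` of the sketch is `S ω i j = ∑_{p : H i p = j} Sg i p · e p`,
and coordinate `p` is recovered as the median over rows of `Sg i p · S ω i (H i p ω)`.
Then (i) each single-row estimate is unbiased, `E[Sg i p · S_{i, H i p}] = e p`; and
(ii) there are absolute constants `c₁, c₂ > 0` such that for any `ε > 0` and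
`ρ ∈ (0,1)`, if `w ≥ c₁/ε²` and `v ≥ c₂ log(d/ρ)`, then with probability at least
`1 - ρ` the recovered vector `C(e)` satisfies `‖e - C(e)‖_∞ ≤ ε‖e‖`. -/
theorem count_sketch_unbiased_and_linf_recovery :
    ∃ c₁ : ℝ, 0 < c₁ ∧ ∃ c₂ : ℝ, 0 < c₂ ∧
      ∀ (d v w : ℕ), 0 < v → 0 < w →
      ∀ {Ω : Type} [inst : MeasurableSpace Ω] (μ : Measure Ω), IsProbabilityMeasure μ →
      ∀ (e : EuclideanSpace ℝ (Fin d))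
        (H : Fin v → Fin d → Ω → Fin w) (Sg : Fin v → Fin d → Ω → ℝ),
      (∀ i p, Measurable (H i p)) → (∀ i p, Measurable (Sg i p)) →
      -- uniform hashes
      (∀ i p (j : Fin w), μ {ω | H i p ω = j} = (w : ℝ≥0∞)⁻¹) →
      -- uniform random signs
      (∀ i p, μ {ω | Sg i p ω = 1} = 2⁻¹ ∧ μ {ω | Sg i p ω = -1} = 2⁻¹) →
      (∀ i p ω, Sg i p ω = 1 ∨ Sg i p ω = -1) →
      -- all hashes and signs are mutually independent
      iIndepFun
        (β := fun s : (Fin v × Fin d) ⊕ (Fin v × Fin d) =>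
          Sum.elim (fun _ => Fin w) (fun _ => ℝ) s)
        (m := fun s => match s with
          | .inl _ => (inferInstance : MeasurableSpace (Fin w))
          | .inr _ => (inferInstance : MeasurableSpace ℝ))
        (fun s => match s with
          | .inl q => H q.1 q.2
          | .inr q => Sg q.1 q.2) μ →
      ∀ (S : Ω → Fin v → Fin w → ℝ),
      (∀ ω i j, S ω i j = ∑ p, if H i p ω = j then Sg i p ω * e p else 0) →
      ∀ (est : Ω → Fin d → ℝ),
      (∀ ω p, est ω p =
        listMedian (List.ofFn fun i : Fin v => Sg i p ω * S ω i (H i p ω))) →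
      -- (i) single-row unbiasedness
      ((∀ i p, ∫ ω, Sg i p ω * S ω i (H i p ω) ∂μ = e p) ∧
      -- (ii) high-probability ℓ∞ recovery
        (∀ ε ρ : ℝ, 0 < ε → 0 < ρ → ρ < 1 →
          c₁ / ε ^ 2 ≤ (w : ℝ) → c₂ * Real.log (d / ρ) ≤ (v : ℝ) →
          ENNReal.ofReal (1 - ρ) ≤
            μ {ω | ‖(fun p => e p - est ω p : Fin d → ℝ)‖ ≤ ε * ‖e‖})) := by
  refine ⟨16, by norm_num, 2, by norm_num, ?_⟩
  intro d v w hv hw Ω inst μ hμ e H Sg hHm hSgm hHu hSgu hSgpm hIndep S hS est hest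
  set F : ∀ s : CSIdx v d, Ω → CSVal v d w s :=
    (fun s => match s with
      | .inl q => H q.1 q.2
      | .inr q => Sg q.1 q.2) with hF
  have hFmeas : ∀ s, Measurable (F s) := by
    rintro (⟨i, p⟩ | ⟨i, p⟩)
    · exact hHm i p
    · exact hSgm i p
  have habs : ∀ i p ω, |Sg i p ω| = 1 := by
    intro i p ω; rcases hSgpm i p ω with h | h <;> rw [h] <;> norm_num
  have hsq : ∀ i p ω, Sg i p ω * Sg i p ω = 1 := by
    intro i p ω; rcases hSgpm i p ω with h | h <;> rw [h] <;> norm_num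
  set X : Fin v → Fin d → Ω → ℝ := fun i p ω =>
    ∑ q, if H i q ω = H i p ω then Sg i p ω * Sg i q ω * e q else 0 with hXdef
  have hX : ∀ i p ω, Sg i p ω * S ω i (H i p ω) = X i p ω := by
    intro i p ω
    rw [hS, Finset.mul_sum]
    refine Finset.sum_congr rfl fun q _ => ?_
    split_ifs with h <;> ring
  have hXmeas : ∀ i p, Measurable (X i p) := by
    intro i p
    refine Finset.measurable_sum _ fun q _ => Measurable.ite ?_ ?_ measurable_const
    · exact measurableSet_eq_fun (hHm i q) (hHm i p)
    · exact ((hSgm i p).mul (hSgm i q)).mul_const _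
  have htermbd : ∀ i p q ω,
      |if H i q ω = H i p ω then Sg i p ω * Sg i q ω * e q else 0| ≤ |e q| := by
    intro i p q ω
    split_ifs with h
    · rw [abs_mul, abs_mul, habs, habs, one_mul, one_mul]
    · simp
  have hXbdd : ∀ i p ω, |X i p ω| ≤ ∑ q, |e q| := by
    intro i p ω
    refine (Finset.abs_sum_le_sum_abs _ _).trans ?_
    exact Finset.sum_le_sum fun q _ => htermbd i p q ω
  have hXint : ∀ i p, Integrable (X i p) μ :=
    fun i p => bdd_integrable (hXmeas i p) _ (hXbdd i p)
  -- key zero-integral fact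
  have hIndep' : iIndepFun (m := csValMS) F μ := by
    have hfam : (fun s : CSIdx v d => match s with
        | .inl _ => (inferInstance : MeasurableSpace (Fin w))
        | .inr _ => (inferInstance : MeasurableSpace ℝ)) = csValMS (v := v) (d := d) (w := w) := by
      funext s; cases s <;> rfl
    rw [← hfam]
    exact hIndep
  have hzero : ∀ (a : Fin v) (b : Fin d) (T : Finset (CSIdx v d))
      (hT : Sum.inr (a, b) ∉ T)
      (φ : (∀ t : T, CSVal v d w (t : CSIdx v d)) → ℝ)
      (hφ : Measurable φ)
      (hint : Integrable (fun ω => φ (fun t => F (t : CSIdx v d) ω)) μ),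
      ∫ ω, Sg a b ω * φ (fun t => F (t : CSIdx v d) ω) ∂μ = 0 := by
    intro a b T hT φ hφ hint
    have hind : IndepFun (Sg a b)
        (fun ω => φ (fun t => F (t : CSIdx v d) ω)) μ :=
      indep_single_tuple hIndep' hFmeas (Sum.inr (a, b)) T hT φ hφ
    have h := hind.integral_mul_eq_mul_integral
      (bdd_integrable (hSgm a b) 1 (fun ω => (habs a b ω).le)).aestronglyMeasurable hint.aestronglyMeasurable
    have h2 : ∫ ω, Sg a b ω * φ (fun t => F (t : CSIdx v d) ω) ∂μ
        = integral μ (Sg a b * fun ω => φ (fun t => F (t : CSIdx v d) ω)) := rfl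
    rw [h2, h, sign_integral_zero (hSgm a b) (hSgu a b).1 (hSgu a b).2 (hSgpm a b), zero_mul]
  -- the mean of each single-row estimate
  have hmean : ∀ i p, ∫ ω, X i p ω ∂μ = e p := by
    intro i p
    have hterm_int : ∀ q : Fin d,
        Integrable (fun ω => if H i q ω = H i p ω
          then Sg i p ω * Sg i q ω * e q else 0) μ := by
      intro q
      refine bdd_integrable ?_ |e q| (fun ω => htermbd i p q ω)
      refine Measurable.ite ?_ ?_ measurable_const
      · exact measurableSet_eq_fun (hHm i q) (hHm i p)
      · exact ((hSgm i p).mul (hSgm i q)).mul_const _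
    rw [hXdef]
    rw [integral_finset_sum _ fun q _ => hterm_int q]
    rw [Finset.sum_eq_single_of_mem p (Finset.mem_univ p)]
    · have : (fun ω => if H i p ω = H i p ω then Sg i p ω * Sg i p ω * e p else 0)
        = fun _ => e p := by
        funext ω; rw [if_pos rfl, hsq, one_mul]
      rw [this, integral_const]
      simp
    · intro q _ hqp
      have hmem1 : (Sum.inl (i, q) : CSIdx v d)
          ∈ ({Sum.inl (i, q), Sum.inl (i, p), Sum.inr (i, p)} : Finset (CSIdx v d)) := by simp
      have hmem2 : (Sum.inl (i, p) : CSIdx v d)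
          ∈ ({Sum.inl (i, q), Sum.inl (i, p), Sum.inr (i, p)} : Finset (CSIdx v d)) := by simp
      have hmem3 : (Sum.inr (i, p) : CSIdx v d)
          ∈ ({Sum.inl (i, q), Sum.inl (i, p), Sum.inr (i, p)} : Finset (CSIdx v d)) := by simp
      have hTnot : (Sum.inr (i, q) : CSIdx v d)
          ∉ ({Sum.inl (i, q), Sum.inl (i, p), Sum.inr (i, p)} : Finset (CSIdx v d)) := by
        simp [hqp]
      set φ : (∀ t : ({Sum.inl (i, q), Sum.inl (i, p), Sum.inr (i, p)} : Finset (CSIdx v d)),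
          CSVal v d w (t : CSIdx v d)) → ℝ :=
        fun x => if getHx (w := w) (i, q) hmem1 x = getHx (i, p) hmem2 x
          then getSx (i, p) hmem3 x * e q else 0 with hφdef
      have hφm : Measurable φ := by
        refine Measurable.ite ?_ ?_ measurable_const
        · exact measurableSet_eq_fun
            (measurable_getHx _ _) (measurable_getHx _ _)
        · exact (measurable_getSx _ _).mul_const _
      have hcomp : ∀ ω, φ (fun t => F (t : CSIdx v d) ω)
          = (if H i q ω = H i p ω then Sg i p ω * e q else 0) := fun ω => rfl
      have hint : Integrable (fun ω => φ (fun t => F (t : CSIdx v d) ω)) μ := by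
        simp only [hcomp]
        refine bdd_integrable ?_ |e q| ?_
        · refine Measurable.ite ?_ ?_ measurable_const
          · exact measurableSet_eq_fun (hHm i q) (hHm i p)
          · exact (hSgm i p).mul_const _
        · intro ω
          split_ifs with h
          · rw [abs_mul, habs, one_mul]
          · simp
      calc ∫ ω, (if H i q ω = H i p ω then Sg i p ω * Sg i q ω * e q else 0) ∂μ
          = ∫ ω, Sg i q ω * φ (fun t => F (t : CSIdx v d) ω) ∂μ := by
            congr 1; funext ω
            rw [hcomp ω]
            split_ifs with h <;> ring
        _ = 0 := hzero i q _ hTnot φ hφm hint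
  constructor
  · intro i p
    have : (fun ω => Sg i p ω * S ω i (H i p ω)) = X i p := funext (hX i p)
    rw [this]
    exact hmean i p
  · intro ε ρ hε hρ0 hρ1 hc1 hc2
    by_cases he : e = 0
    · -- degenerate case: e = 0
      have hest0 : ∀ ω p, est ω p = 0 := by
        intro ω p
        rw [hest]
        refine listMedian_zero ?_
        intro x hx
        rw [List.mem_ofFn] at hx
        obtain ⟨i, rfl⟩ := hx
        show Sg i p ω * S ω i (H i p ω) = 0
        rw [hX, hXdef]
        simp [he]
      have hset : {ω | ‖(fun p => e p - est ω p : Fin d → ℝ)‖ ≤ ε * ‖e‖} = Set.univ := by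
        ext ω
        simp only [Set.mem_setOf_eq, Set.mem_univ, iff_true]
        have h1 : (fun p => e p - est ω p : Fin d → ℝ) = 0 := by
          funext p; simp [hest0 ω p, he]
        rw [h1, norm_zero, he, norm_zero, mul_zero]
      rw [hset, measure_univ]
      exact ENNReal.ofReal_le_one.mpr (by linarith)
    -- main case
    have hd : 0 < d := by
      rcases Nat.eq_zero_or_pos d with h0 | h
      · exfalso
        apply he
        subst h0
        haveI : Subsingleton (EuclideanSpace ℝ (Fin 0)) :=
          ⟨fun a b => by ext x; exact x.elim0⟩
        exact Subsingleton.elim e 0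
      · exact h
    have hne : (0:ℝ) < ‖e‖ := norm_pos_iff.mpr he
    set t := ε * ‖e‖ with htdef
    have ht : 0 < t := mul_pos hε hne
    -- hash collision probability
    have hcol : ∀ (i : Fin v) (q p : Fin d), q ≠ p →
        μ {ω | H i q ω = H i p ω} = (w : ℝ≥0∞)⁻¹ := by
      intro i q p hqp
      have hind : IndepFun (H i q) (H i p) μ :=
        hIndep'.indepFun (show (Sum.inl (i, q) : CSIdx v d) ≠ Sum.inl (i, p) by simp [hqp])
      have hset : {ω | H i q ω = H i p ω}
          = ⋃ j : Fin w, (H i q ⁻¹' {j} ∩ H i p ⁻¹' {j}) := by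
        ext ω
        simp only [Set.mem_setOf_eq, Set.mem_iUnion, Set.mem_inter_iff, Set.mem_preimage,
          Set.mem_singleton_iff]
        exact ⟨fun h => ⟨H i p ω, h, rfl⟩, fun ⟨j, h1, h2⟩ => h1.trans h2.symm⟩
      rw [hset, measure_iUnion ?_ ?_]
      · have hterm : ∀ j : Fin w,
            μ (H i q ⁻¹' {j} ∩ H i p ⁻¹' {j}) = (w:ℝ≥0∞)⁻¹ * (w:ℝ≥0∞)⁻¹ := by
          intro j
          have h2 := hind.measure_inter_preimage_eq_mul {j} {j}
            (measurableSet_singleton j) (measurableSet_singleton j)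
          rw [h2]
          have e1 : H i q ⁻¹' {j} = {ω | H i q ω = j} := rfl
          have e2 : H i p ⁻¹' {j} = {ω | H i p ω = j} := rfl
          rw [e1, e2, hHu i q j, hHu i p j]
        rw [tsum_fintype]
        simp only [hterm]
        rw [Finset.sum_const, Finset.card_univ, Fintype.card_fin, nsmul_eq_mul,
          ← mul_assoc, ENNReal.mul_inv_cancel (Nat.cast_ne_zero.mpr hw.ne')
          (ENNReal.natCast_ne_top w), one_mul]
      · intro j j' hjj'
        simp only [Function.onFun]
        rw [Set.disjoint_left]
        rintro ω ⟨hq, hp⟩ ⟨hq', hp'⟩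
        exact hjj' ((Set.mem_singleton_iff.mp hq).symm.trans (Set.mem_singleton_iff.mp hq'))
      · exact fun j => ((hHm i q) (measurableSet_singleton j)).inter
          ((hHm i p) (measurableSet_singleton j))
    -- cross terms vanish
    have hcross : ∀ (i : Fin v) (p q r : Fin d), q ≠ p → r ≠ p → r ≠ q →
        ∫ ω, (if H i q ω = H i p ω then Sg i p ω * Sg i q ω * e q else 0)
          * (if H i r ω = H i p ω then Sg i p ω * Sg i r ω * e r else 0) ∂μ = 0 := by
      intro i p q r hqp hrp hrq
      have hmem1 : (Sum.inl (i, q) : CSIdx v d) ∈ ({Sum.inl (i, q), Sum.inl (i, r),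
          Sum.inl (i, p), Sum.inr (i, r)} : Finset (CSIdx v d)) := by simp
      have hmem2 : (Sum.inl (i, r) : CSIdx v d) ∈ ({Sum.inl (i, q), Sum.inl (i, r),
          Sum.inl (i, p), Sum.inr (i, r)} : Finset (CSIdx v d)) := by simp
      have hmem3 : (Sum.inl (i, p) : CSIdx v d) ∈ ({Sum.inl (i, q), Sum.inl (i, r),
          Sum.inl (i, p), Sum.inr (i, r)} : Finset (CSIdx v d)) := by simp
      have hmem4 : (Sum.inr (i, r) : CSIdx v d) ∈ ({Sum.inl (i, q), Sum.inl (i, r),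
          Sum.inl (i, p), Sum.inr (i, r)} : Finset (CSIdx v d)) := by simp
      have hTnot : (Sum.inr (i, q) : CSIdx v d) ∉ ({Sum.inl (i, q), Sum.inl (i, r),
          Sum.inl (i, p), Sum.inr (i, r)} : Finset (CSIdx v d)) := by
        simp [hrq.symm]
      set φ : (∀ t : ({Sum.inl (i, q), Sum.inl (i, r), Sum.inl (i, p), Sum.inr (i, r)} :
          Finset (CSIdx v d)), CSVal v d w (t : CSIdx v d)) → ℝ :=
        fun x => if getHx (w := w) (i, q) hmem1 x = getHx (i, p) hmem3 x
            ∧ getHx (i, r) hmem2 x = getHx (i, p) hmem3 x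
          then getSx (i, r) hmem4 x * (e q * e r) else 0 with hφdef
      have hφm : Measurable φ := by
        refine Measurable.ite ?_ ?_ measurable_const
        · exact (measurableSet_eq_fun
            (measurable_getHx _ _) (measurable_getHx _ _)).inter
            (measurableSet_eq_fun
            (measurable_getHx _ _) (measurable_getHx _ _))
        · exact (measurable_getSx _ _).mul_const _
      have hcomp : ∀ ω, φ (fun t => F (t : CSIdx v d) ω)
          = (if H i q ω = H i p ω ∧ H i r ω = H i p ω
              then Sg i r ω * (e q * e r) else 0) := fun ω => rfl
      have hint : Integrable (fun ω => φ (fun t => F (t : CSIdx v d) ω)) μ := by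
        simp only [hcomp]
        refine bdd_integrable ?_ |e q * e r| ?_
        · refine Measurable.ite ?_ ?_ measurable_const
          · exact (measurableSet_eq_fun (hHm i q) (hHm i p)).inter
              (measurableSet_eq_fun (hHm i r) (hHm i p))
          · exact (hSgm i r).mul_const _
        · intro ω
          split_ifs with h
          · rw [abs_mul, habs, one_mul]
          · simp; positivity
      calc ∫ ω, (if H i q ω = H i p ω then Sg i p ω * Sg i q ω * e q else 0)
            * (if H i r ω = H i p ω then Sg i p ω * Sg i r ω * e r else 0) ∂μ
          = ∫ ω, Sg i q ω * φ (fun t => F (t : CSIdx v d) ω) ∂μ := by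
            congr 1; funext ω
            rw [hcomp ω, ite_zero_mul_ite_zero, mul_ite, mul_zero]
            by_cases hc : H i q ω = H i p ω ∧ H i r ω = H i p ω
            · rw [if_pos hc, if_pos hc]
              linear_combination Sg i q ω * Sg i r ω * e q * e r * hsq i p ω
            · rw [if_neg hc, if_neg hc]
        _ = 0 := hzero i q _ hTnot φ hφm hint
    -- second moment bound
    have hvarint : ∀ (i : Fin v) (p : Fin d),
        ∫ ω, (X i p ω - e p)^2 ∂μ ≤ ‖e‖^2 / w := by
      intro i p
      set g : Fin d → Ω → ℝ :=
        fun q ω => if H i q ω = H i p ω then Sg i p ω * Sg i q ω * e q else 0 with hgdef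
      have hgm : ∀ q, Measurable (g q) := by
        intro q
        refine Measurable.ite ?_ ?_ measurable_const
        · exact measurableSet_eq_fun (hHm i q) (hHm i p)
        · exact ((hSgm i p).mul (hSgm i q)).mul_const _
      have hgbd : ∀ q ω, |g q ω| ≤ |e q| := fun q ω => htermbd i p q ω
      have hggint : ∀ q r, Integrable (fun ω => g q ω * g r ω) μ := by
        intro q r
        refine bdd_integrable ((hgm q).mul (hgm r)) (|e q| * |e r|) ?_
        intro ω
        rw [abs_mul]
        exact mul_le_mul (hgbd q ω) (hgbd r ω) (abs_nonneg _) (abs_nonneg _)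
      have hY : ∀ ω, X i p ω - e p = ∑ q ∈ Finset.univ.erase p, g q ω := by
        intro ω
        have h1 : X i p ω = (∑ q ∈ Finset.univ.erase p, g q ω) + g p ω :=
          (Finset.sum_erase_add _ _ (Finset.mem_univ p)).symm
        have h2 : g p ω = e p := by
          show (if H i p ω = H i p ω then Sg i p ω * Sg i p ω * e p else 0) = e p
          rw [if_pos rfl, hsq, one_mul]
        rw [h1, h2]; ring
      have hstep : ∫ ω, (X i p ω - e p)^2 ∂μ
          = ∑ q ∈ Finset.univ.erase p, ∑ r ∈ Finset.univ.erase p,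
              ∫ ω, g q ω * g r ω ∂μ := by
        have h1 : ∫ ω, (X i p ω - e p)^2 ∂μ
            = ∫ ω, ∑ q ∈ Finset.univ.erase p, ∑ r ∈ Finset.univ.erase p,
                g q ω * g r ω ∂μ := by
          congr 1; funext ω
          rw [hY ω, sq, Finset.sum_mul_sum]
        rw [h1, integral_finset_sum _ fun q _ => integrable_finset_sum _ fun r _ => hggint q r]
        exact Finset.sum_congr rfl fun q _ =>
          integral_finset_sum _ fun r _ => hggint q r
      have hdiag : ∀ q, q ∈ Finset.univ.erase p →
          ∫ ω, g q ω * g q ω ∂μ = (w:ℝ)⁻¹ * e q ^ 2 := by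
        intro q hq
        have hqp : q ≠ p := Finset.ne_of_mem_erase hq
        have hSmeas : MeasurableSet {ω | H i q ω = H i p ω} :=
          measurableSet_eq_fun (hHm i q) (hHm i p)
        have hpt : ∀ ω, g q ω * g q ω
            = Set.indicator {ω | H i q ω = H i p ω} (fun _ => e q ^ 2) ω := by
          intro ω
          rw [Set.indicator_apply]
          simp only [Set.mem_setOf_eq]
          show (if H i q ω = H i p ω then Sg i p ω * Sg i q ω * e q else 0)
            * (if H i q ω = H i p ω then Sg i p ω * Sg i q ω * e q else 0)
            = if H i q ω = H i p ω then e q ^ 2 else 0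
          split_ifs with h
          · linear_combination (e q ^ 2 * Sg i q ω * Sg i q ω) * hsq i p ω
              + e q ^ 2 * hsq i q ω
          · norm_num
        calc ∫ ω, g q ω * g q ω ∂μ
            = ∫ ω, Set.indicator {ω | H i q ω = H i p ω} (fun _ => e q ^ 2) ω ∂μ := by
              congr 1; funext ω; exact hpt ω
          _ = (μ {ω | H i q ω = H i p ω}).toReal • (e q ^ 2) :=
              integral_indicator_const _ hSmeas
          _ = (w:ℝ)⁻¹ * e q ^ 2 := by
              rw [hcol i q p hqp, smul_eq_mul, ENNReal.toReal_inv, ENNReal.toReal_natCast]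
      have hnorm2 : ‖e‖^2 = ∑ q, e q ^ 2 := by
        rw [EuclideanSpace.norm_eq, Real.sq_sqrt (by positivity)]
        refine Finset.sum_congr rfl fun q _ => ?_
        rw [Real.norm_eq_abs, sq_abs]
      rw [hstep]
      have hsum : ∑ q ∈ Finset.univ.erase p, ∑ r ∈ Finset.univ.erase p,
          ∫ ω, g q ω * g r ω ∂μ
          = ∑ q ∈ Finset.univ.erase p, (w:ℝ)⁻¹ * e q ^ 2 := by
        refine Finset.sum_congr rfl fun q hq => ?_
        rw [Finset.sum_eq_single_of_mem q hq]
        · exact hdiag q hq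
        · intro r hr hrq
          exact hcross i p q r (Finset.ne_of_mem_erase hq) (Finset.ne_of_mem_erase hr) hrq
      rw [hsum, ← Finset.mul_sum]
      have hle : ∑ q ∈ Finset.univ.erase p, e q ^ 2 ≤ ‖e‖^2 := by
        rw [hnorm2]
        exact Finset.sum_le_sum_of_subset_of_nonneg (Finset.subset_univ _)
          (fun q _ _ => sq_nonneg _)
      have hwpos : (0:ℝ) < w := Nat.cast_pos.mpr hw
      calc (w:ℝ)⁻¹ * ∑ q ∈ Finset.univ.erase p, e q ^ 2
          ≤ (w:ℝ)⁻¹ * ‖e‖^2 := by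
            exact mul_le_mul_of_nonneg_left hle (by positivity)
        _ = ‖e‖^2 / w := by rw [div_eq_mul_inv, mul_comm]
    -- Chebyshev per row
    have hrow : ∀ (i : Fin v) (p : Fin d),
        μ {ω | t < |X i p ω - e p|} ≤ ENNReal.ofReal (1/16) := by
      intro i p
      have hmem2 : MemLp (X i p) 2 μ :=
        MemLp.of_bound (hXmeas i p).aestronglyMeasurable _
          (Filter.Eventually.of_forall fun ω => by
            rw [Real.norm_eq_abs]; exact hXbdd i p ω)
      have hmuX : μ[X i p] = e p := hmean i p
      have hvar : variance (X i p) μ ≤ ‖e‖^2 / w := by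
        rw [variance_eq_integral hmem2.aemeasurable]; change ∫ ω, (((X i p - fun _ => μ[X i p]) ^ (2:ℕ) : Ω → ℝ)) ω ∂μ ≤ _
        have hfun : (X i p - fun _ => μ[X i p]) ^ (2:ℕ) = fun ω => (X i p ω - e p)^2 := by
          funext ω
          simp [hmuX]
        rw [hfun]
        exact hvarint i p
      have hcheb := meas_ge_le_variance_div_sq (μ := μ) hmem2 ht
      rw [hmuX] at hcheb
      refine le_trans (le_trans (measure_mono fun ω hω => ?_) hcheb) ?_
      · simp only [Set.mem_setOf_eq] at hω ⊢
        exact hω.le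
      · refine ENNReal.ofReal_le_ofReal ?_
        have hwpos : (0:ℝ) < w := Nat.cast_pos.mpr hw
        have ht2 : t^2 = ε^2 * ‖e‖^2 := by rw [htdef, mul_pow]
        have hw16 : (16:ℝ) ≤ w * ε^2 := by
          calc (16:ℝ) = 16 / ε^2 * ε^2 := by field_simp
            _ ≤ w * ε^2 := mul_le_mul_of_nonneg_right hc1 (sq_nonneg ε)
        calc variance (X i p) μ / t^2 ≤ (‖e‖^2 / w) / t^2 :=
              (div_le_div_iff_of_pos_right (pow_pos ht 2)).mpr hvar
          _ = ‖e‖^2 / (w * t^2) := div_div _ _ _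
          _ ≤ 1/16 := by
              rw [ht2, div_le_div_iff₀ (by positivity) (by norm_num)]
              nlinarith [mul_le_mul_of_nonneg_right hw16 (sq_nonneg ‖e‖)]
    -- blocks of indices belonging to a single row
    set B : Fin v → Finset (CSIdx v d) := fun i =>
      (Finset.univ.image fun p : Fin d => (Sum.inl (i, p) : CSIdx v d))
      ∪ (Finset.univ.image fun p : Fin d => (Sum.inr (i, p) : CSIdx v d)) with hBdef
    have hmemBl : ∀ i (q : Fin d), (Sum.inl (i, q) : CSIdx v d) ∈ B i := by
      intro i q; simp [hBdef]
    have hmemBr : ∀ i (q : Fin d), (Sum.inr (i, q) : CSIdx v d) ∈ B i := by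
      intro i q; simp [hBdef]
    have hBfst : ∀ (i : Fin v) s, s ∈ B i → Sum.elim Prod.fst Prod.fst s = i := by
      intro i s hs
      simp only [hBdef, Finset.mem_union, Finset.mem_image, Finset.mem_univ, true_and] at hs
      rcases hs with ⟨p, rfl⟩ | ⟨p, rfl⟩ <;> rfl
    -- the bad events
    set bad : Fin v → Fin d → Set Ω := fun i p => {ω | t < |X i p ω - e p|} with hbaddef
    have hbadmeas : ∀ i p, MeasurableSet (bad i p) := fun i p =>
      measurableSet_lt measurable_const ((hXmeas i p).sub measurable_const).abs
    -- each bad event is a preimage of a measurable set under the row tuple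
    have hrep : ∀ (i : Fin v) (p : Fin d),
        ∃ bs : Set (∀ s : (B i : Finset (CSIdx v d)), CSVal v d w (s : CSIdx v d)),
          MeasurableSet bs ∧ bad i p = (fun ω => fun s : (B i : Finset (CSIdx v d)) =>
            F (s : CSIdx v d) ω) ⁻¹' bs := by
      intro i p
      set Φ : (∀ s : (B i : Finset (CSIdx v d)), CSVal v d w (s : CSIdx v d)) → ℝ :=
        fun x => ∑ q, if getHx (w := w) (i, q) (hmemBl i q) x = getHx (i, p) (hmemBl i p) x
          then getSx (i, p) (hmemBr i p) x * getSx (i, q) (hmemBr i q) x * e q else 0 with hΦdef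
      have hΦmeas : Measurable Φ := by
        refine Finset.measurable_sum _ fun q _ => Measurable.ite ?_ ?_ measurable_const
        · exact measurableSet_eq_fun
            (measurable_getHx _ _) (measurable_getHx _ _)
        · exact ((measurable_getSx _ _).mul (measurable_getSx _ _)).mul_const _
      have hΦcomp : ∀ ω, Φ (fun s => F (s : CSIdx v d) ω) = X i p ω := fun ω => rfl
      refine ⟨{x | t < |Φ x - e p|}, ?_, ?_⟩
      · exact measurableSet_lt measurable_const ((hΦmeas.sub measurable_const)).abs
      · ext ω
        simp only [hbaddef, Set.mem_setOf_eq, Set.mem_preimage, hΦcomp ω]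
    choose bs hbs1 hbs2 using hrep
    -- independence of bad events across rows
    have hprod : ∀ (p : Fin d) (A : Finset (Fin v)),
        μ (⋂ i ∈ A, bad i p) = ∏ i ∈ A, μ (bad i p) := by
      intro p A
      induction A using Finset.induction_on with
      | empty => simp
      | @insert a A ha ih =>
        have hdisj : Disjoint (B a) (A.biUnion B) := by
          rw [Finset.disjoint_left]
          intro s hs hs'
          rw [Finset.mem_biUnion] at hs'
          obtain ⟨j, hj, hsj⟩ := hs'
          have hja : j ≠ a := fun h => ha (h ▸ hj)
          exact hja ((hBfst _ _ hsj).symm.trans (hBfst _ _ hs))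
        have hsub : ∀ j ∈ A, (B j : Finset (CSIdx v d)) ⊆ A.biUnion B :=
          fun j hj => Finset.subset_biUnion_of_mem _ hj
        set SA : Set (∀ s : (A.biUnion B : Finset (CSIdx v d)), CSVal v d w (s : CSIdx v d)) :=
          ⋂ (j : Fin v) (hj : j ∈ A),
            (fun x (s : (B j : Finset (CSIdx v d))) =>
              x ⟨(s : CSIdx v d), hsub j hj s.2⟩) ⁻¹' (bs j p) with hSAdef
        have hSAmeas : MeasurableSet SA := by
          refine MeasurableSet.iInter fun j => MeasurableSet.iInter fun hj => ?_
          exact (measurable_pi_lambda _ fun s => measurable_pi_apply _) (hbs1 j p)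
        have hAinter : (⋂ i ∈ A, bad i p)
            = (fun ω => fun s : (A.biUnion B : Finset (CSIdx v d)) =>
                F (s : CSIdx v d) ω) ⁻¹' SA := by
          ext ω
          simp only [Set.mem_iInter, Set.mem_preimage, hSAdef]
          constructor
          · intro h j hj
            have h2 := h j hj
            rw [hbs2 j p] at h2
            exact h2
          · intro h j hj
            rw [hbs2 j p]
            exact h j hj
        rw [Finset.set_biInter_insert, hAinter, hbs2 a p]
        have hind2 := (hIndep'.indepFun_finset (B a) (A.biUnion B) hdisj
          hFmeas).measure_inter_preimage_eq_mul _ _ (hbs1 a p) hSAmeas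
        rw [hind2, ← hAinter, ← hbs2 a p, ih, Finset.prod_insert ha]
    -- the failure events
    set m₀ := v - v / 2 with hm0
    set fail : Fin d → Set Ω := fun p =>
      ⋃ A ∈ Finset.univ.powersetCard m₀, ⋂ i ∈ A, bad i p with hfaildef
    have hfailmeas : ∀ p, MeasurableSet (fail p) := by
      intro p
      refine MeasurableSet.biUnion (Finset.univ.powersetCard m₀).countable_toSet
        fun A _ => MeasurableSet.biInter A.countable_toSet fun i _ => hbadmeas i p
    have hfailbound : ∀ p, μ (fail p) ≤ ((2:ℝ≥0∞)^v)⁻¹ := by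
      intro p
      have hof : ENNReal.ofReal (1/16 : ℝ) = ((16:ℝ≥0∞))⁻¹ := by
        rw [one_div, ENNReal.ofReal_inv_of_pos (by norm_num)]
        norm_num
      have h2 : ∀ A ∈ Finset.univ.powersetCard m₀,
          μ (⋂ i ∈ A, bad i p) ≤ ((16:ℝ≥0∞))⁻¹ ^ m₀ := by
        intro A hA
        have hAcard : A.card = m₀ := (Finset.mem_powersetCard_univ.mp hA)
        rw [hprod p A]
        calc ∏ i ∈ A, μ (bad i p) ≤ ∏ _i ∈ A, ENNReal.ofReal (1/16) :=
              Finset.prod_le_prod' fun i _ => hrow i p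
          _ = ((16:ℝ≥0∞))⁻¹ ^ m₀ := by rw [Finset.prod_const, hAcard, hof]
      calc μ (fail p) ≤ ∑ A ∈ Finset.univ.powersetCard m₀, μ (⋂ i ∈ A, bad i p) :=
            measure_biUnion_finset_le _ _
        _ ≤ ∑ _A ∈ Finset.univ.powersetCard m₀, ((16:ℝ≥0∞))⁻¹ ^ m₀ :=
            Finset.sum_le_sum h2
        _ = (Finset.univ.powersetCard m₀).card • (((16:ℝ≥0∞))⁻¹ ^ m₀) :=
            (Finset.sum_const _)
        _ = (v.choose m₀ : ℝ≥0∞) * (((16:ℝ≥0∞))⁻¹ ^ m₀) := by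
            rw [Finset.card_powersetCard, Finset.card_univ, Fintype.card_fin, nsmul_eq_mul]
        _ ≤ ((2:ℝ≥0∞)^v) * (((16:ℝ≥0∞))⁻¹ ^ m₀) := by
            refine mul_le_mul_left ?_ _
            have hch : v.choose m₀ ≤ 2 ^ v := by
              calc v.choose m₀ ≤ ∑ j ∈ Finset.range (v+1), v.choose j := by
                    rcases le_or_gt m₀ v with h | h
                    · exact Finset.single_le_sum (fun j _ => Nat.zero_le _)
                        (Finset.mem_range.mpr (Nat.lt_succ_of_le h))
                    · rw [Nat.choose_eq_zero_of_lt h]; exact Nat.zero_le _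
                _ = 2 ^ v := Nat.sum_range_choose v
            calc ((v.choose m₀ : ℕ) : ℝ≥0∞) ≤ ((2^v : ℕ) : ℝ≥0∞) := Nat.cast_le.mpr hch
              _ = (2:ℝ≥0∞)^v := by push_cast; rfl
        _ ≤ ((2:ℝ≥0∞)^v) * (((2:ℝ≥0∞))⁻¹ ^ (2*v)) := by
            refine mul_le_mul_right ?_ _
            have h16 : ((16:ℝ≥0∞))⁻¹ = ((2:ℝ≥0∞))⁻¹ ^ 4 := by
              rw [← ENNReal.inv_pow]
              norm_num
            rw [h16, ← pow_mul]
            refine pow_le_pow_of_le_one zero_le (ENNReal.inv_le_one.mpr one_le_two) ?_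
            omega
        _ = ((2:ℝ≥0∞)^v)⁻¹ := by
            rw [← ENNReal.inv_pow, two_mul, pow_add]
            rw [ENNReal.mul_inv (Or.inl (by positivity)) (Or.inl (by
              exact ENNReal.pow_ne_top ENNReal.ofNat_ne_top))]
            rw [← mul_assoc, ENNReal.mul_inv_cancel (by positivity)
              (ENNReal.pow_ne_top ENNReal.ofNat_ne_top), one_mul]
    -- total failure probability
    have hreal : (d:ℝ) * (((2:ℝ)^v))⁻¹ ≤ ρ := by
      have hlogle : Real.log ((d:ℝ)/ρ) ≤ Real.log ((2:ℝ)^v) := by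
        rw [Real.log_pow]
        rcases le_or_gt (Real.log ((d:ℝ)/ρ)) 0 with hL | hL
        · refine hL.trans ?_
          positivity
        · have hlog2 : (0.6931471803:ℝ) < Real.log 2 := Real.log_two_gt_d9
          nlinarith [hc2]
      have hd0 : (0:ℝ) < (d:ℝ)/ρ := div_pos (Nat.cast_pos.mpr hd) hρ0
      have hdiv : (d:ℝ)/ρ ≤ (2:ℝ)^v := (Real.log_le_log_iff hd0 (by positivity)).mp hlogle
      have h2 : (d:ℝ) ≤ ρ * 2^v := by
        rw [div_le_iff₀ hρ0] at hdiv
        linarith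
      rw [mul_inv_le_iff₀ (by positivity)]
      linarith
    have htotal : μ (⋃ p : Fin d, fail p) ≤ ENNReal.ofReal ρ := by
      calc μ (⋃ p : Fin d, fail p) ≤ ∑ p : Fin d, μ (fail p) :=
            measure_iUnion_fintype_le _ _
        _ ≤ ∑ _p : Fin d, ((2:ℝ≥0∞)^v)⁻¹ := Finset.sum_le_sum fun p _ => hfailbound p
        _ = (d : ℝ≥0∞) * ((2:ℝ≥0∞)^v)⁻¹ := by
            rw [Finset.sum_const, Finset.card_univ, Fintype.card_fin, nsmul_eq_mul]
        _ = ENNReal.ofReal ((d:ℝ) * (((2:ℝ)^v))⁻¹) := by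
            rw [ENNReal.ofReal_mul (Nat.cast_nonneg d)]
            congr 1
            · exact (ENNReal.ofReal_natCast d).symm
            · rw [ENNReal.ofReal_inv_of_pos (by positivity)]
              congr 1
              rw [ENNReal.ofReal_pow (by norm_num)]
              norm_num
        _ ≤ ENNReal.ofReal ρ := ENNReal.ofReal_le_ofReal hreal
    -- complement of total failure is contained in the good event
    have hsub : (⋃ p : Fin d, fail p)ᶜ ⊆ {ω | ‖(fun p => e p - est ω p : Fin d → ℝ)‖ ≤ ε * ‖e‖} := by
      intro ω hω
      simp only [Set.mem_compl_iff, Set.mem_iUnion, not_exists] at hω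
      show ‖(fun p => e p - est ω p : Fin d → ℝ)‖ ≤ ε * ‖e‖
      rw [show ε * ‖e‖ = t from rfl]
      refine (pi_norm_le_iff_of_nonneg ht.le).mpr ?_
      intro p
      rw [Real.norm_eq_abs]
      have hcard : (Finset.univ.filter (fun i => ω ∈ bad i p)).card < m₀ := by
        by_contra hcon
        push_neg at hcon
        apply hω p
        obtain ⟨A, hAsub, hAcard⟩ := Finset.exists_subset_card_eq hcon
        refine Set.mem_iUnion₂.mpr ⟨A, Finset.mem_powersetCard_univ.mpr hAcard, ?_⟩
        exact Set.mem_iInter₂.mpr fun i hi => (Finset.mem_filter.mp (hAsub hi)).2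
      rw [hest, abs_sub_comm]
      apply listMedian_close
      have hXfn : (List.ofFn fun i : Fin v => Sg i p ω * S ω i (H i p ω))
          = List.ofFn fun i => X i p ω := congrArg List.ofFn (funext fun i => hX i p ω)
      rw [hXfn, List.length_ofFn, countP_ofFn]
      have hgoodbad : Finset.univ.filter
            (fun i : Fin v => (decide (|X i p ω - e p| ≤ t) : Bool) = true)
          = Finset.univ.filter (fun i => ¬ (ω ∈ bad i p)) := by
        refine Finset.filter_congr fun i _ => ?_
        simp [hbaddef, not_lt]
      have hsplit := Finset.card_filter_add_card_filter_not
        (s := Finset.univ) (p := fun i : Fin v => ω ∈ bad i p)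
      rw [Finset.card_univ, Fintype.card_fin] at hsplit
      rw [show (Finset.univ.filter fun i : Fin v => decide (|X i p ω - e p| ≤ t))
          = Finset.univ.filter (fun i : Fin v =>
            (decide (|X i p ω - e p| ≤ t) : Bool) = true) from rfl, hgoodbad]
      omega
    -- conclude
    calc ENNReal.ofReal (1 - ρ) = 1 - ENNReal.ofReal ρ := by
          rw [ENNReal.ofReal_sub _ hρ0.le, ENNReal.ofReal_one]
      _ ≤ 1 - μ (⋃ p : Fin d, fail p) := tsub_le_tsub_left htotal 1
      _ = μ ((⋃ p : Fin d, fail p)ᶜ) :=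
          (prob_compl_eq_one_sub (MeasurableSet.iUnion hfailmeas)).symm
      _ ≤ μ {ω | ‖(fun p => e p - est ω p : Fin d → ℝ)‖ ≤ ε * ‖e‖} := measure_mono hsub
end

section
/- Under the ConEF algorithm (p_t^i = η g_t^i + e_t^i; Δ_t^i = Q(p_t^i); x_{t+1} = x_t − (1/N)Σ_i Δ_t^i; e_{t+1}^i = C(p_t^i − Δ_t^i), with e_0^i = 0), where the stochastic gradients satisfy E[g_t^i | x_t] = ∇f(x_t), E[||g_t^i − ∇f(x_t)||² | x_t] ≤ σ² and E[||∇f(x_t)||²] ≤ G², the error compressor C is unbiased with E[||C(x) − x||² | x] ≤ θ||x||², and the gradient compressor Q satisfies E[||Q(x) − x||² | x] ≤ δ||x||²: if there exist c ∈ (0,1) and λ > 0 with δ = c/((1+λ)(1+√θ)²), then for every t ≥ 0, E[|| (1/N) Σ_{i=1}^N e_{t+1}^i ||²] ≤ (c/((1−c)λ)) · η² (σ² + G²). -/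
open MeasureTheory ProbabilityTheory
open scoped ENNReal BigOperators

private lemma conef_enorm_sq {E : Type*} [NormedAddCommGroup E] (v : E) :
    (‖v‖₊ : ℝ≥0∞) ^ 2 = ENNReal.ofReal (‖v‖ ^ 2) := by
  rw [ENNReal.ofReal_pow (norm_nonneg v), ofReal_norm, enorm_eq_nnnorm]

private lemma conef_indep_mono {Ω : Type*} {mΩ : MeasurableSpace Ω} {μ : Measure Ω}
    {m1 m2 m1' m2' : MeasurableSpace Ω} (h : Indep m1 m2 μ) (h1 : m1' ≤ m1) (h2 : m2' ≤ m2) :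
    Indep m1' m2' μ :=
  fun t1 t2 ht1 ht2 => h t1 t2 (h1 _ ht1) (h2 _ ht2)

/-- transfer lemma -/
private lemma conef_transfer {Ω β γ : Type*} [MeasurableSpace Ω] [MeasurableSpace β]
    [MeasurableSpace γ] {μ : Measure Ω} [IsProbabilityMeasure μ]
    {X : Ω → β} {s : Ω → γ} (hX : Measurable X) (hs : Measurable s)
    (hind : IndepFun X s μ) {ν : Measure γ} [IsProbabilityMeasure ν]
    (hlaw : μ.map s = ν) {F : β × γ → ℝ≥0∞} (hF : Measurable F) :
    ∫⁻ ω, F (X ω, s ω) ∂μ = ∫⁻ ω, ∫⁻ y, F (X ω, y) ∂ν ∂μ := by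
  have hmap := (indepFun_iff_map_prod_eq_prod_map_map hX.aemeasurable hs.aemeasurable).1 hind
  rw [hlaw] at hmap
  calc ∫⁻ ω, F (X ω, s ω) ∂μ
      = ∫⁻ z, F z ∂(μ.map fun ω => (X ω, s ω)) := (lintegral_map hF (hX.prodMk hs)).symm
    _ = ∫⁻ z, F z ∂((μ.map X).prod ν) := by rw [hmap]
    _ = ∫⁻ x, ∫⁻ y, F (x, y) ∂ν ∂(μ.map X) := lintegral_prod _ hF.aemeasurable
    _ = ∫⁻ ω, ∫⁻ y, F (X ω, y) ∂ν ∂μ :=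
        lintegral_map (Measurable.lintegral_prod_right' hF) hX

/-- mean–variance second moment bound -/
private lemma conef_meanvar {d : ℕ} {Ω' : Type*} [MeasurableSpace Ω'] {ν : Measure Ω'}
    [IsProbabilityMeasure ν] {h : Ω' → EuclideanSpace ℝ (Fin d)} (hm : Measurable h)
    {m : EuclideanSpace ℝ (Fin d)} (hmean : ∫ ω, h ω ∂ν = m) {V : ℝ} (hV : 0 ≤ V)
    (hvar : ∫⁻ ω, (‖h ω - m‖₊ : ℝ≥0∞) ^ 2 ∂ν ≤ ENNReal.ofReal V) :
    ∫⁻ ω, (‖h ω‖₊ : ℝ≥0∞) ^ 2 ∂ν ≤ ENNReal.ofReal (‖m‖ ^ 2 + V) := by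
  set u : Ω' → EuclideanSpace ℝ (Fin d) := fun ω => h ω - m with hu
  have hum : Measurable u := hm.sub measurable_const
  -- u ∈ L²
  have hu2 : MemLp u 2 ν := by
    refine ⟨hum.aestronglyMeasurable, ?_⟩
    rw [eLpNorm_eq_lintegral_rpow_enorm_toReal (by norm_num) (by norm_num)]
    have h2 : (2 : ℝ≥0∞).toReal = (2 : ℝ) := by norm_num
    rw [h2]
    have heq : ∀ ω, (‖u ω‖ₑ) ^ (2 : ℝ) = (‖u ω‖ₑ) ^ 2 := by
      intro ω
      rw [show (2:ℝ) = ((2:ℕ):ℝ) by norm_num, ENNReal.rpow_natCast]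
    rw [lintegral_congr heq]
    refine ENNReal.rpow_lt_top_of_nonneg (by norm_num) ?_
    exact ((lt_of_le_of_lt hvar ENNReal.ofReal_lt_top)).ne
  have hIntu : Integrable u ν := hu2.integrable one_le_two
  have hInth : Integrable h ν := by
    have h1 := hIntu.add (integrable_const m)
    have h2 : (fun ω => u ω + m) = h := funext fun ω => by simp [hu]
    rwa [← h2]
  have hu0 : ∫ ω, u ω ∂ν = 0 := by
    rw [hu]
    rw [integral_sub hInth (integrable_const m), hmean, integral_const]
    simp
  have hcross : ∫ ω, (inner ℝ m (u ω) : ℝ) ∂ν = 0 := by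
    rw [integral_inner hIntu m, hu0, inner_zero_right]
  have hIntcross : Integrable (fun ω => (inner ℝ m (u ω) : ℝ)) ν := hIntu.const_inner m
  have hIntusq : Integrable (fun ω => ‖u ω‖ ^ 2) ν := by
    have := hu2.integrable_norm_rpow (by norm_num) (by norm_num)
    have h2 : (2 : ℝ≥0∞).toReal = (2 : ℝ) := by norm_num
    rw [h2] at this
    refine this.congr (Filter.Eventually.of_forall fun ω => ?_)
    simp [Real.rpow_natCast]
  have hh2 : MemLp h 2 ν := by
    have h1 := hu2.add (memLp_const (p := 2) (μ := ν) m)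
    have h2 : (u + fun _ => m) = h := funext fun ω => by simp [hu]
    rwa [← h2]
  have hInthsq : Integrable (fun ω => ‖h ω‖ ^ 2) ν := by
    have := hh2.integrable_norm_rpow (by norm_num) (by norm_num)
    have h2 : (2 : ℝ≥0∞).toReal = (2 : ℝ) := by norm_num
    rw [h2] at this
    refine this.congr (Filter.Eventually.of_forall fun ω => ?_)
    simp [Real.rpow_natCast]
  -- the expansion
  have hpt : ∀ ω, ‖h ω‖ ^ 2 = ‖m‖ ^ 2 + 2 * (inner ℝ m (u ω) : ℝ) + ‖u ω‖ ^ 2 := by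
    intro ω
    have : h ω = m + u ω := by simp [hu]
    rw [this, norm_add_sq_real]
  have hkey : ∫ ω, ‖h ω‖ ^ 2 ∂ν = ‖m‖ ^ 2 + ∫ ω, ‖u ω‖ ^ 2 ∂ν := by
    rw [integral_congr_ae (Filter.Eventually.of_forall hpt)]
    have e1 : ∫ a, (‖m‖ ^ 2 + 2 * (inner ℝ m (u a) : ℝ) + ‖u a‖ ^ 2) ∂ν
        = (∫ a, (‖m‖ ^ 2 + 2 * (inner ℝ m (u a) : ℝ)) ∂ν) + ∫ a, ‖u a‖ ^ 2 ∂ν :=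
      integral_add ((integrable_const _).add (hIntcross.const_mul 2)) hIntusq
    have e2 : ∫ a, (‖m‖ ^ 2 + 2 * (inner ℝ m (u a) : ℝ)) ∂ν
        = (∫ _a, (‖m‖ ^ 2 : ℝ) ∂ν) + ∫ a, 2 * (inner ℝ m (u a) : ℝ) ∂ν :=
      integral_add (integrable_const _) (hIntcross.const_mul 2)
    rw [e1, e2, integral_const_mul, hcross, integral_const]
    simp
  -- bound on ∫ ‖u‖²
  have husq_le : ∫ ω, ‖u ω‖ ^ 2 ∂ν ≤ V := by
    have h1 : ENNReal.ofReal (∫ ω, ‖u ω‖ ^ 2 ∂ν) = ∫⁻ ω, (‖u ω‖₊ : ℝ≥0∞) ^ 2 ∂ν := by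
      rw [ofReal_integral_eq_lintegral_ofReal hIntusq
        (Filter.Eventually.of_forall fun ω => sq_nonneg _)]
      exact lintegral_congr fun ω => (conef_enorm_sq (u ω)).symm
    have h2 : ENNReal.ofReal (∫ ω, ‖u ω‖ ^ 2 ∂ν) ≤ ENNReal.ofReal V := h1 ▸ hvar
    exact (ENNReal.ofReal_le_ofReal_iff hV).1 h2
  have hfin : ∫⁻ ω, (‖h ω‖₊ : ℝ≥0∞) ^ 2 ∂ν = ENNReal.ofReal (∫ ω, ‖h ω‖ ^ 2 ∂ν) := by
    rw [ofReal_integral_eq_lintegral_ofReal hInthsq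
      (Filter.Eventually.of_forall fun ω => sq_nonneg _)]
    exact lintegral_congr fun ω => conef_enorm_sq (h ω)
  rw [hfin]
  exact ENNReal.ofReal_le_ofReal (by rw [hkey]; linarith)

private lemma conef_young {E : Type*} [NormedAddCommGroup E] [InnerProductSpace ℝ E]
    (a b : E) {lam : ℝ} (hlam : 0 < lam) :
    ‖a + b‖ ^ 2 ≤ (1 + lam⁻¹) * ‖a‖ ^ 2 + (1 + lam) * ‖b‖ ^ 2 := by
  have h1 : ‖a + b‖ ≤ ‖a‖ + ‖b‖ := norm_add_le a b
  have h2 : ‖a + b‖ ^ 2 ≤ (‖a‖ + ‖b‖) ^ 2 := by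
    apply sq_le_sq' <;> nlinarith [norm_nonneg (a + b), norm_nonneg a, norm_nonneg b]
  have h3 : (‖a‖ + ‖b‖) ^ 2 ≤ (1 + lam⁻¹) * ‖a‖ ^ 2 + (1 + lam) * ‖b‖ ^ 2 := by
    have hs : 0 ≤ (lam * ‖b‖ - ‖a‖) ^ 2 := sq_nonneg _
    have hl : 0 < lam := hlam
    have hinv : lam * lam⁻¹ = 1 := mul_inv_cancel₀ hlam.ne'
    have key : 2 * ‖a‖ * ‖b‖ ≤ lam⁻¹ * ‖a‖ ^ 2 + lam * ‖b‖ ^ 2 := by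
      rw [← sub_nonneg]
      have expand : lam⁻¹ * ‖a‖ ^ 2 + lam * ‖b‖ ^ 2 - 2 * ‖a‖ * ‖b‖
          = lam⁻¹ * (‖a‖ - lam * ‖b‖) ^ 2 := by
        field_simp
        ring
      rw [expand]
      positivity
    nlinarith
  linarith

set_option maxHeartbeats 2000000 in
/-- **ConEF error-energy bound (Lemma 1).**
Under the ConEF algorithm (`p t i = η • g t i + e t i`, `Δ t i = Q (p t i)`,
`x (t+1) = x t - (1/N) • ∑ i, Δ t i`, `e (t+1) i = C (p t i - Δ t i)`, `e 0 i = 0`),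
with unbiased stochastic gradients of variance `≤ σ²` and `E[‖∇f(x t)‖²] ≤ G²`,
an unbiased error compressor `C` with `E[‖C a - a‖²|a] ≤ θ‖a‖²`, and a gradient
compressor `Q` with `E[‖Q a - a‖²|a] ≤ δ‖a‖²` where `δ = c/((1+λ)(1+√θ)²)` for some
`c ∈ (0,1)`, `λ > 0`: for every `t ≥ 0`,
`E[‖(1/N) ∑ i, e (t+1) i‖²] ≤ (c/((1-c)λ)) η² (σ² + G²)`. -/
theorem conef_error_energy_bound
    (d N : ℕ) (hN : 0 < N)
    (σ G δ θ c lam η : ℝ)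
    (hσ : 0 ≤ σ) (hG : 0 ≤ G) (hθ : 0 ≤ θ)
    (hδ0 : 0 < δ) (hδ1 : δ < 1) (hc : c ∈ Set.Ioo (0 : ℝ) 1) (hlam : 0 < lam)
    (hδeq : δ = c / ((1 + lam) * (1 + Real.sqrt θ) ^ 2))
    (hη : 0 < η)
    (f : EuclideanSpace ℝ (Fin d) → ℝ) (hf : Differentiable ℝ f)
    -- seed spaces for the stochastic gradients and the two compressors
    {Ωg ΩQ ΩC : Type} [MeasurableSpace Ωg] [MeasurableSpace ΩQ] [MeasurableSpace ΩC]
    (νg : Measure Ωg) (νQ : Measure ΩQ) (νC : Measure ΩC)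
    [IsProbabilityMeasure νg] [IsProbabilityMeasure νQ] [IsProbabilityMeasure νC]
    (G' : ℕ → Fin N → EuclideanSpace ℝ (Fin d) → Ωg → EuclideanSpace ℝ (Fin d))
    (Q : EuclideanSpace ℝ (Fin d) → ΩQ → EuclideanSpace ℝ (Fin d))
    (C : EuclideanSpace ℝ (Fin d) → ΩC → EuclideanSpace ℝ (Fin d))
    (hGmeas : ∀ t i, Measurable (Function.uncurry (G' t i)))
    (hQmeas : Measurable (Function.uncurry Q))
    (hCmeas : Measurable (Function.uncurry C))
    -- Assumption 2: unbiased stochastic gradients with bounded variance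
    (hGmean : ∀ t i a, ∫ ω, G' t i a ω ∂νg = gradient f a)
    (hGvar : ∀ t i a,
      ∫⁻ ω, (‖G' t i a ω - gradient f a‖₊ : ℝ≥0∞) ^ 2 ∂νg ≤ ENNReal.ofReal (σ ^ 2))
    -- Assumption 4: contractive gradient compressor
    (hQvar : ∀ a, ∫⁻ ω, (‖Q a ω - a‖₊ : ℝ≥0∞) ^ 2 ∂νQ ≤ ENNReal.ofReal (δ * ‖a‖ ^ 2))
    -- Assumption 3: unbiased error compressor
    (hCmean : ∀ a, ∫ ω, C a ω ∂νC = a)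
    (hCvar : ∀ a, ∫⁻ ω, (‖C a ω - a‖₊ : ℝ≥0∞) ^ 2 ∂νC ≤ ENNReal.ofReal (θ * ‖a‖ ^ 2))
    -- the underlying sample space carrying i.i.d. fresh seeds for every (t, i)
    {Ω : Type} [MeasurableSpace Ω] (μ : Measure Ω) [IsProbabilityMeasure μ]
    (seed : ℕ → Fin N → Ω → Ωg × ΩQ × ΩC)
    (hseedMeas : ∀ t i, Measurable (seed t i))
    (hseedLaw : ∀ t i, Measure.map (seed t i) μ = νg.prod (νQ.prod νC))
    (hseedIndep : iIndepFun
      (fun q : ℕ × Fin N => seed q.1 q.2) μ)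
    -- the ConEF trajectories
    (x0 : EuclideanSpace ℝ (Fin d))
    (x : ℕ → Ω → EuclideanSpace ℝ (Fin d))
    (e g p Δ : ℕ → Fin N → Ω → EuclideanSpace ℝ (Fin d))
    (hx0 : ∀ ω, x 0 ω = x0)
    (he0 : ∀ i ω, e 0 i ω = 0)
    (hg : ∀ t i ω, g t i ω = G' t i (x t ω) (seed t i ω).1)
    (hp : ∀ t i ω, p t i ω = η • g t i ω + e t i ω)
    (hΔ : ∀ t i ω, Δ t i ω = Q (p t i ω) (seed t i ω).2.1)
    (hx : ∀ t ω, x (t + 1) ω = x t ω - (N : ℝ)⁻¹ • ∑ i, Δ t i ω)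
    (he : ∀ t i ω, e (t + 1) i ω = C (p t i ω - Δ t i ω) (seed t i ω).2.2)
    -- Assumption 2: bounded expected squared gradient norm
    (hgradbound : ∀ t,
      ∫⁻ ω, (‖gradient f (x t ω)‖₊ : ℝ≥0∞) ^ 2 ∂μ ≤ ENNReal.ofReal (G ^ 2)) :
    ∀ t : ℕ,
      ∫⁻ ω, (‖(N : ℝ)⁻¹ • ∑ i, e (t + 1) i ω‖₊ : ℝ≥0∞) ^ 2 ∂μ
        ≤ ENNReal.ofReal ((c / ((1 - c) * lam)) * η ^ 2 * (σ ^ 2 + G ^ 2)) := by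
  obtain ⟨hc0, hc1⟩ := hc
  -- the filtration generated by the seeds before time `t`
  set Fσ : ℕ → MeasurableSpace Ω := fun t =>
    ⨆ q ∈ {q : ℕ × Fin N | q.1 < t},
      MeasurableSpace.comap (fun ω => seed q.1 q.2 ω) inferInstance with hFσ
  have hFle : ∀ t, Fσ t ≤ ‹MeasurableSpace Ω› := by
    intro t
    refine iSup_le fun q => iSup_le fun _ => ?_
    exact (hseedMeas q.1 q.2).comap_le
  have hFmono : ∀ s t : ℕ, s ≤ t → Fσ s ≤ Fσ t := by
    intro s t hst
    exact biSup_mono fun q hq => lt_of_lt_of_le hq hst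
  have hseedF : ∀ (a : ℕ) (i : Fin N) (t : ℕ), a < t → Measurable[Fσ t] (seed a i) := by
    intro a i t hat
    exact Measurable.of_comap_le (le_biSup
      (fun q : ℕ × Fin N => MeasurableSpace.comap (fun ω => seed q.1 q.2 ω) inferInstance)
      (show (a, i) ∈ {q : ℕ × Fin N | q.1 < t} from hat))
  -- measurability of the trajectories with respect to the filtration
  have hmeas : ∀ t, Measurable[Fσ t] (x t) ∧ ∀ i, Measurable[Fσ t] (e t i) := by
    intro t
    induction t with
    | zero =>
      constructor
      · have hxe : x 0 = fun _ => x0 := funext hx0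
        rw [hxe]; exact measurable_const
      · intro i
        have hee : e 0 i = fun _ => (0 : EuclideanSpace ℝ (Fin d)) := funext (he0 i)
        rw [hee]; exact measurable_const
    | succ t ih =>
      obtain ⟨hxm, hem⟩ := ih
      have hmono : Fσ t ≤ Fσ (t+1) := hFmono t (t+1) (Nat.le_succ t)
      have hxm' : Measurable[Fσ (t+1)] (x t) := hxm.mono hmono le_rfl
      have hsm : ∀ i : Fin N, Measurable[Fσ (t+1)] (seed t i) :=
        fun i => hseedF t i (t+1) (Nat.lt_succ_self t)
      have hgm : ∀ i, Measurable[Fσ (t+1)] (g t i) := by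
        intro i
        have hgeq : g t i = fun ω => Function.uncurry (G' t i) (x t ω, (seed t i ω).1) :=
          funext fun ω => hg t i ω
        rw [hgeq]
        exact (hGmeas t i).comp (hxm'.prodMk (hsm i).fst)
      have hpm : ∀ i, Measurable[Fσ (t+1)] (p t i) := by
        intro i
        have hpeq : p t i = fun ω => η • g t i ω + e t i ω := funext fun ω => hp t i ω
        rw [hpeq]
        exact ((hgm i).const_smul η).add ((hem i).mono hmono le_rfl)
      have hΔm : ∀ i, Measurable[Fσ (t+1)] (Δ t i) := by
        intro i
        have hΔeq : Δ t i = fun ω => Function.uncurry Q (p t i ω, (seed t i ω).2.1) :=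
          funext fun ω => hΔ t i ω
        rw [hΔeq]
        exact hQmeas.comp ((hpm i).prodMk (hsm i).snd.fst)
      constructor
      · have hxeq : x (t+1) = fun ω => x t ω - (N : ℝ)⁻¹ • ∑ i, Δ t i ω :=
          funext fun ω => hx t ω
        rw [hxeq]
        exact hxm'.sub ((Finset.measurable_sum Finset.univ fun i _ => hΔm i).const_smul ((N : ℝ)⁻¹))
      · intro i
        have heeq : e (t+1) i = fun ω => Function.uncurry C (p t i ω - Δ t i ω, (seed t i ω).2.2) :=
          funext fun ω => he t i ω
        rw [heeq]
        exact hCmeas.comp (((hpm i).sub (hΔm i)).prodMk (hsm i).snd.snd)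
  -- ambient measurability
  have hxA : ∀ t, Measurable (x t) := fun t => (hmeas t).1.mono (hFle t) le_rfl
  have heA : ∀ t i, Measurable (e t i) := fun t i => ((hmeas t).2 i).mono (hFle t) le_rfl
  -- independence of the state at time t from the seed at time t
  have hindep : ∀ t i, IndepFun (fun ω => (x t ω, e t i ω)) (seed t i) μ := by
    intro t i
    have hX : Measurable[Fσ t] fun ω => (x t ω, e t i ω) :=
      Measurable.prodMk (hmeas t).1 ((hmeas t).2 i)
    rw [IndepFun_iff_Indep]
    have hdisj : Disjoint {q : ℕ × Fin N | q.1 < t} ({(t, i)} : Set (ℕ × Fin N)) := by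
      rw [Set.disjoint_left]
      rintro q hq rfl
      exact lt_irrefl t hq
    have hbase := indep_iSup_of_disjoint
      (fun q : ℕ × Fin N => (hseedMeas q.1 q.2).comap_le) hseedIndep.iIndep hdisj
    refine conef_indep_mono hbase ?_ ?_
    · exact hX.comap_le
    · rw [iSup_singleton]
  -- real-arithmetic coefficient bounds
  have hst : 0 ≤ Real.sqrt θ := Real.sqrt_nonneg θ
  have hsq : Real.sqrt θ ^ 2 = θ := Real.sq_sqrt hθ
  have h1θ : 1 + θ ≤ (1 + Real.sqrt θ) ^ 2 := by nlinarith
  have hδprod : δ * ((1 + lam) * (1 + Real.sqrt θ) ^ 2) = c := by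
    rw [hδeq]
    field_simp
  have hcoef1 : (1 + θ) * δ * (1 + lam) ≤ c := by nlinarith
  have hcoef2 : (1 + θ) * δ * ((1 + lam⁻¹) * η ^ 2) ≤ c / lam * η ^ 2 := by
    rw [div_mul_eq_mul_div, le_div_iff₀ hlam]
    have heq : (1 + θ) * δ * ((1 + lam⁻¹) * η ^ 2) * lam = (1 + θ) * δ * (1 + lam) * η ^ 2 := by
      field_simp
      ring
    rw [heq]
    exact mul_le_mul_of_nonneg_right hcoef1 (sq_nonneg η)
  -- the one-step recursion bound
  have key : ∀ t i, ∫⁻ ω, (‖e (t+1) i ω‖₊ : ℝ≥0∞) ^ 2 ∂μ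
      ≤ ENNReal.ofReal c * ∫⁻ ω, (‖e t i ω‖₊ : ℝ≥0∞) ^ 2 ∂μ
        + ENNReal.ofReal (c / lam * η ^ 2 * (σ ^ 2 + G ^ 2)) := by
    intro t i
    set F : (EuclideanSpace ℝ (Fin d) × EuclideanSpace ℝ (Fin d)) × (Ωg × ΩQ × ΩC) → ℝ≥0∞ :=
      fun z => (‖C ((η • G' t i z.1.1 z.2.1 + z.1.2)
        - Q (η • G' t i z.1.1 z.2.1 + z.1.2) z.2.2.1) z.2.2.2‖₊ : ℝ≥0∞) ^ 2 with hFdef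
    have hPmeas : Measurable fun z : (EuclideanSpace ℝ (Fin d) × EuclideanSpace ℝ (Fin d))
        × (Ωg × ΩQ × ΩC) => η • G' t i z.1.1 z.2.1 + z.1.2 := by
      have h1 : Measurable fun z : (EuclideanSpace ℝ (Fin d) × EuclideanSpace ℝ (Fin d))
          × (Ωg × ΩQ × ΩC) => Function.uncurry (G' t i) (z.1.1, z.2.1) :=
        (hGmeas t i).comp ((measurable_fst.fst).prodMk (measurable_snd.fst))
      exact (h1.const_smul η).add measurable_fst.snd
    have hWmeas : Measurable fun z : (EuclideanSpace ℝ (Fin d) × EuclideanSpace ℝ (Fin d))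
        × (Ωg × ΩQ × ΩC) => (η • G' t i z.1.1 z.2.1 + z.1.2)
          - Q (η • G' t i z.1.1 z.2.1 + z.1.2) z.2.2.1 := by
      have h2 : Measurable fun z : (EuclideanSpace ℝ (Fin d) × EuclideanSpace ℝ (Fin d))
          × (Ωg × ΩQ × ΩC) => Function.uncurry Q
            (η • G' t i z.1.1 z.2.1 + z.1.2, z.2.2.1) :=
        hQmeas.comp (hPmeas.prodMk (measurable_snd.snd.fst))
      exact hPmeas.sub h2
    have hFmeas : Measurable F := by
      have h3 : Measurable fun z : (EuclideanSpace ℝ (Fin d) × EuclideanSpace ℝ (Fin d))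
          × (Ωg × ΩQ × ΩC) => Function.uncurry C
            ((η • G' t i z.1.1 z.2.1 + z.1.2)
              - Q (η • G' t i z.1.1 z.2.1 + z.1.2) z.2.2.1, z.2.2.2) :=
        hCmeas.comp (hWmeas.prodMk measurable_snd.snd.snd)
      exact (h3.nnnorm.coe_nnreal_ennreal).pow_const 2
    -- inner bound on the seed average, for fixed state (a, b)
    have hinner : ∀ a b : EuclideanSpace ℝ (Fin d),
        ∫⁻ s, F ((a, b), s) ∂(νg.prod (νQ.prod νC))
          ≤ ENNReal.ofReal c * ENNReal.ofReal (‖b‖ ^ 2)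
            + ENNReal.ofReal (c / lam * η ^ 2)
              * ENNReal.ofReal (‖gradient f a‖ ^ 2 + σ ^ 2) := by
      intro a b
      have step3 : ∀ w : EuclideanSpace ℝ (Fin d),
          ∫⁻ s3, (‖C w s3‖₊ : ℝ≥0∞) ^ 2 ∂νC ≤ ENNReal.ofReal ((1 + θ) * ‖w‖ ^ 2) := by
        intro w
        have hCm : Measurable (C w) := hCmeas.comp (measurable_const.prodMk measurable_id)
        have h := conef_meanvar hCm (hCmean w) (by positivity) (hCvar w)
        refine le_trans h (le_of_eq ?_)
        congr 1
        ring
      have step2 : ∀ u : EuclideanSpace ℝ (Fin d),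
          ∫⁻ s2, ENNReal.ofReal ((1 + θ) * ‖u - Q u s2‖ ^ 2) ∂νQ
            ≤ ENNReal.ofReal ((1 + θ) * δ) * ENNReal.ofReal (‖u‖ ^ 2) := by
        intro u
        have h1 : ∀ s2 : ΩQ, ENNReal.ofReal ((1 + θ) * ‖u - Q u s2‖ ^ 2)
            = ENNReal.ofReal (1 + θ) * (‖u - Q u s2‖₊ : ℝ≥0∞) ^ 2 := fun s2 => by
          rw [ENNReal.ofReal_mul (by positivity), conef_enorm_sq]
        rw [lintegral_congr h1, lintegral_const_mul' _ _ ENNReal.ofReal_ne_top]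
        have h2 : ∫⁻ s2, (‖u - Q u s2‖₊ : ℝ≥0∞) ^ 2 ∂νQ ≤ ENNReal.ofReal (δ * ‖u‖ ^ 2) := by
          refine le_trans (le_of_eq (lintegral_congr fun s2 => ?_)) (hQvar u)
          rw [← neg_sub (Q u s2) u, nnnorm_neg]
        calc ENNReal.ofReal (1 + θ) * ∫⁻ s2, (‖u - Q u s2‖₊ : ℝ≥0∞) ^ 2 ∂νQ
            ≤ ENNReal.ofReal (1 + θ) * ENNReal.ofReal (δ * ‖u‖ ^ 2) := mul_le_mul_right h2 _
          _ = ENNReal.ofReal ((1 + θ) * δ) * ENNReal.ofReal (‖u‖ ^ 2) := by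
              rw [← ENNReal.ofReal_mul (by positivity), ← ENNReal.ofReal_mul (by positivity),
                mul_assoc]
      have hGm : Measurable fun s1 => G' t i a s1 :=
        (hGmeas t i).comp (measurable_const.prodMk measurable_id)
      have stepg : ∫⁻ s1, (‖G' t i a s1‖₊ : ℝ≥0∞) ^ 2 ∂νg
          ≤ ENNReal.ofReal (‖gradient f a‖ ^ 2 + σ ^ 2) :=
        conef_meanvar hGm (hGmean t i a) (by positivity) (hGvar t i a)
      have hyoung : ∀ s1 : Ωg,
          ENNReal.ofReal ((1 + θ) * δ) * ENNReal.ofReal (‖η • G' t i a s1 + b‖ ^ 2)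
            ≤ ENNReal.ofReal ((1 + θ) * δ) * (ENNReal.ofReal ((1 + lam⁻¹) * η ^ 2)
              * (‖G' t i a s1‖₊ : ℝ≥0∞) ^ 2 + ENNReal.ofReal ((1 + lam) * ‖b‖ ^ 2)) := by
        intro s1
        refine mul_le_mul_right ?_ _
        have hns : ‖η • G' t i a s1‖ ^ 2 = η ^ 2 * ‖G' t i a s1‖ ^ 2 := by
          rw [norm_smul, mul_pow, Real.norm_eq_abs, sq_abs]
        have h4 : ‖η • G' t i a s1 + b‖ ^ 2
            ≤ (1 + lam⁻¹) * η ^ 2 * ‖G' t i a s1‖ ^ 2 + (1 + lam) * ‖b‖ ^ 2 := by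
          have h5 := conef_young (η • G' t i a s1) b hlam
          rw [hns] at h5
          ring_nf at h5 ⊢
          linarith
        calc ENNReal.ofReal (‖η • G' t i a s1 + b‖ ^ 2)
            ≤ ENNReal.ofReal ((1 + lam⁻¹) * η ^ 2 * ‖G' t i a s1‖ ^ 2
                + (1 + lam) * ‖b‖ ^ 2) := ENNReal.ofReal_le_ofReal h4
          _ = ENNReal.ofReal ((1 + lam⁻¹) * η ^ 2) * (‖G' t i a s1‖₊ : ℝ≥0∞) ^ 2
                + ENNReal.ofReal ((1 + lam) * ‖b‖ ^ 2) := by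
              rw [ENNReal.ofReal_add (by positivity) (by positivity),
                ENNReal.ofReal_mul (by positivity), conef_enorm_sq]
      calc ∫⁻ s, F ((a, b), s) ∂(νg.prod (νQ.prod νC))
          = ∫⁻ s1, ∫⁻ y, F ((a, b), (s1, y)) ∂(νQ.prod νC) ∂νg :=
            lintegral_prod _ ((hFmeas.comp
              (measurable_const.prodMk measurable_id)).aemeasurable)
        _ = ∫⁻ s1, ∫⁻ s2, ∫⁻ s3, F ((a, b), (s1, (s2, s3))) ∂νC ∂νQ ∂νg := by
            refine lintegral_congr fun s1 => ?_
            exact lintegral_prod _ ((hFmeas.comp (measurable_const.prodMk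
              (measurable_const.prodMk measurable_id))).aemeasurable)
        _ = ∫⁻ s1, ∫⁻ s2, ∫⁻ s3, (‖C ((η • G' t i a s1 + b)
              - Q (η • G' t i a s1 + b) s2) s3‖₊ : ℝ≥0∞) ^ 2 ∂νC ∂νQ ∂νg := rfl
        _ ≤ ∫⁻ s1, ∫⁻ s2, ENNReal.ofReal ((1 + θ)
              * ‖(η • G' t i a s1 + b) - Q (η • G' t i a s1 + b) s2‖ ^ 2) ∂νQ ∂νg :=
            lintegral_mono fun s1 => lintegral_mono fun s2 =>
              step3 ((η • G' t i a s1 + b) - Q (η • G' t i a s1 + b) s2)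
        _ ≤ ∫⁻ s1, ENNReal.ofReal ((1 + θ) * δ)
              * ENNReal.ofReal (‖η • G' t i a s1 + b‖ ^ 2) ∂νg :=
            lintegral_mono fun s1 => step2 (η • G' t i a s1 + b)
        _ ≤ ∫⁻ s1, ENNReal.ofReal ((1 + θ) * δ) * (ENNReal.ofReal ((1 + lam⁻¹) * η ^ 2)
              * (‖G' t i a s1‖₊ : ℝ≥0∞) ^ 2 + ENNReal.ofReal ((1 + lam) * ‖b‖ ^ 2)) ∂νg :=
            lintegral_mono hyoung
        _ = ENNReal.ofReal ((1 + θ) * δ) * (ENNReal.ofReal ((1 + lam⁻¹) * η ^ 2)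
              * (∫⁻ s1, (‖G' t i a s1‖₊ : ℝ≥0∞) ^ 2 ∂νg)
                + ENNReal.ofReal ((1 + lam) * ‖b‖ ^ 2)) := by
            rw [lintegral_const_mul' _ _ ENNReal.ofReal_ne_top,
              lintegral_add_right _ measurable_const,
              lintegral_const_mul' _ _ ENNReal.ofReal_ne_top, lintegral_const, measure_univ,
              mul_one]
        _ ≤ ENNReal.ofReal ((1 + θ) * δ) * (ENNReal.ofReal ((1 + lam⁻¹) * η ^ 2)
              * ENNReal.ofReal (‖gradient f a‖ ^ 2 + σ ^ 2)
                + ENNReal.ofReal ((1 + lam) * ‖b‖ ^ 2)) := by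
            gcongr
        _ ≤ ENNReal.ofReal c * ENNReal.ofReal (‖b‖ ^ 2)
              + ENNReal.ofReal (c / lam * η ^ 2)
                * ENNReal.ofReal (‖gradient f a‖ ^ 2 + σ ^ 2) := by
            rw [mul_add, ← mul_assoc, ← ENNReal.ofReal_mul (by positivity : (0:ℝ) ≤ (1+θ)*δ),
              ← ENNReal.ofReal_mul (by positivity : (0:ℝ) ≤ (1+θ)*δ), add_comm]
            refine add_le_add ?_ ?_
            · rw [← ENNReal.ofReal_mul hc0.le]
              refine ENNReal.ofReal_le_ofReal ?_
              have hcalc : (1 + θ) * δ * ((1 + lam) * ‖b‖ ^ 2)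
                  = ((1 + θ) * δ * (1 + lam)) * ‖b‖ ^ 2 := by ring
              rw [hcalc]
              exact mul_le_mul_of_nonneg_right hcoef1 (sq_nonneg _)
            · exact mul_le_mul_left (ENNReal.ofReal_le_ofReal hcoef2) _
    -- transfer to Ω and integrate
    have hXm : Measurable fun ω => (x t ω, e t i ω) := (hxA t).prodMk (heA t i)
    have htrans := conef_transfer hXm (hseedMeas t i) (hindep t i) (hseedLaw t i) hFmeas
    have hLHS : ∫⁻ ω, (‖e (t+1) i ω‖₊ : ℝ≥0∞) ^ 2 ∂μ
        = ∫⁻ ω, F ((x t ω, e t i ω), seed t i ω) ∂μ := by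
      refine lintegral_congr fun ω => ?_
      rw [hFdef]
      simp only [he, hΔ, hp, hg]
    have hmeas1 : Measurable fun ω => ENNReal.ofReal c * ENNReal.ofReal (‖e t i ω‖ ^ 2) :=
      (((heA t i).norm.pow_const 2).ennreal_ofReal).const_mul _
    rw [hLHS, htrans]
    calc ∫⁻ ω, ∫⁻ y, F ((x t ω, e t i ω), y) ∂(νg.prod (νQ.prod νC)) ∂μ
        ≤ ∫⁻ ω, (ENNReal.ofReal c * ENNReal.ofReal (‖e t i ω‖ ^ 2)
            + ENNReal.ofReal (c / lam * η ^ 2)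
              * ENNReal.ofReal (‖gradient f (x t ω)‖ ^ 2 + σ ^ 2)) ∂μ := by
          refine lintegral_mono fun ω => ?_
          have := hinner (x t ω) (e t i ω)
          exact this
      _ = ENNReal.ofReal c * ∫⁻ ω, ENNReal.ofReal (‖e t i ω‖ ^ 2) ∂μ
            + ENNReal.ofReal (c / lam * η ^ 2)
              * ∫⁻ ω, ENNReal.ofReal (‖gradient f (x t ω)‖ ^ 2 + σ ^ 2) ∂μ := by
          rw [lintegral_add_left hmeas1, lintegral_const_mul' _ _ ENNReal.ofReal_ne_top,
            lintegral_const_mul' _ _ ENNReal.ofReal_ne_top]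
      _ ≤ ENNReal.ofReal c * ∫⁻ ω, (‖e t i ω‖₊ : ℝ≥0∞) ^ 2 ∂μ
            + ENNReal.ofReal (c / lam * η ^ 2)
              * (ENNReal.ofReal (G ^ 2) + ENNReal.ofReal (σ ^ 2)) := by
          refine add_le_add ?_ ?_
          · refine mul_le_mul_right (le_of_eq (lintegral_congr fun ω => ?_)) _
            exact (conef_enorm_sq (e t i ω)).symm
          · refine mul_le_mul_right ?_ _
            have hsplit : ∫⁻ ω, ENNReal.ofReal (‖gradient f (x t ω)‖ ^ 2 + σ ^ 2) ∂μ
                = (∫⁻ ω, ENNReal.ofReal (‖gradient f (x t ω)‖ ^ 2) ∂μ)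
                  + ENNReal.ofReal (σ ^ 2) := by
              have h6 : ∀ ω : Ω, ENNReal.ofReal (‖gradient f (x t ω)‖ ^ 2 + σ ^ 2)
                  = ENNReal.ofReal (‖gradient f (x t ω)‖ ^ 2) + ENNReal.ofReal (σ ^ 2) :=
                fun ω => ENNReal.ofReal_add (by positivity) (by positivity)
              rw [lintegral_congr h6, lintegral_add_right _ measurable_const, lintegral_const,
                measure_univ, mul_one]
            rw [hsplit]
            refine add_le_add ?_ le_rfl
            refine le_trans (le_of_eq (lintegral_congr fun ω => ?_)) (hgradbound t)
            exact (conef_enorm_sq (gradient f (x t ω))).symm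
      _ = ENNReal.ofReal c * ∫⁻ ω, (‖e t i ω‖₊ : ℝ≥0∞) ^ 2 ∂μ
            + ENNReal.ofReal (c / lam * η ^ 2 * (σ ^ 2 + G ^ 2)) := by
          congr 1
          rw [← ENNReal.ofReal_add (by positivity) (by positivity),
            ← ENNReal.ofReal_mul (by positivity)]
          congr 1
          ring
  -- the per-worker energy bound, by induction
  have hTnn : 0 ≤ c / ((1 - c) * lam) * η ^ 2 * (σ ^ 2 + G ^ 2) := by
    have h1c : 0 < 1 - c := by linarith
    positivity
  have main : ∀ t i, ∫⁻ ω, (‖e t i ω‖₊ : ℝ≥0∞) ^ 2 ∂μ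
      ≤ ENNReal.ofReal (c / ((1 - c) * lam) * η ^ 2 * (σ ^ 2 + G ^ 2)) := by
    intro t
    induction t with
    | zero =>
      intro i
      have hz : ∀ ω : Ω, (‖e 0 i ω‖₊ : ℝ≥0∞) ^ 2 = 0 := fun ω => by simp [he0 i ω]
      rw [lintegral_congr hz]
      simp
    | succ t ih =>
      intro i
      refine le_trans (key t i) ?_
      have h1c : 0 < 1 - c := by linarith
      calc ENNReal.ofReal c * ∫⁻ ω, (‖e t i ω‖₊ : ℝ≥0∞) ^ 2 ∂μ
            + ENNReal.ofReal (c / lam * η ^ 2 * (σ ^ 2 + G ^ 2))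
          ≤ ENNReal.ofReal c
              * ENNReal.ofReal (c / ((1 - c) * lam) * η ^ 2 * (σ ^ 2 + G ^ 2))
            + ENNReal.ofReal (c / lam * η ^ 2 * (σ ^ 2 + G ^ 2)) :=
            add_le_add (mul_le_mul_right (ih i) _) le_rfl
        _ = ENNReal.ofReal (c * (c / ((1 - c) * lam) * η ^ 2 * (σ ^ 2 + G ^ 2))
              + c / lam * η ^ 2 * (σ ^ 2 + G ^ 2)) := by
            rw [← ENNReal.ofReal_mul hc0.le,
              ← ENNReal.ofReal_add (by positivity) (by positivity)]
        _ = ENNReal.ofReal (c / ((1 - c) * lam) * η ^ 2 * (σ ^ 2 + G ^ 2)) := by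
            congr 1
            field_simp
            ring
  -- averaging over the workers
  intro t
  have havg : ∀ ω : Ω, (‖(N : ℝ)⁻¹ • ∑ i, e (t + 1) i ω‖₊ : ℝ≥0∞) ^ 2
      ≤ ENNReal.ofReal ((N : ℝ)⁻¹) * ∑ i, (‖e (t + 1) i ω‖₊ : ℝ≥0∞) ^ 2 := by
    intro ω
    have hNpos : (0 : ℝ) < (N : ℝ) := Nat.cast_pos.mpr hN
    have hreal : ‖(N : ℝ)⁻¹ • ∑ i, e (t + 1) i ω‖ ^ 2
        ≤ (N : ℝ)⁻¹ * ∑ i, ‖e (t + 1) i ω‖ ^ 2 := by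
      have h1 : ‖(N : ℝ)⁻¹ • ∑ i, e (t + 1) i ω‖ ^ 2
          = ((N : ℝ)⁻¹) ^ 2 * ‖∑ i, e (t + 1) i ω‖ ^ 2 := by
        rw [norm_smul, mul_pow, Real.norm_eq_abs, sq_abs]
      have h2 : ‖∑ i, e (t + 1) i ω‖ ^ 2 ≤ (∑ i, ‖e (t + 1) i ω‖) ^ 2 := by
        apply sq_le_sq'
        · have := norm_nonneg (∑ i, e (t + 1) i ω)
          have hs := Finset.sum_nonneg fun i (_ : i ∈ Finset.univ) =>
            norm_nonneg (e (t + 1) i ω)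
          linarith
        · exact norm_sum_le _ _
      have h3 : (∑ i, ‖e (t + 1) i ω‖) ^ 2 ≤ (N : ℝ) * ∑ i, ‖e (t + 1) i ω‖ ^ 2 := by
        have := sq_sum_le_card_mul_sum_sq (s := (Finset.univ : Finset (Fin N)))
          (f := fun i => ‖e (t + 1) i ω‖)
        simpa using this
      calc ‖(N : ℝ)⁻¹ • ∑ i, e (t + 1) i ω‖ ^ 2
          = ((N : ℝ)⁻¹) ^ 2 * ‖∑ i, e (t + 1) i ω‖ ^ 2 := h1
        _ ≤ ((N : ℝ)⁻¹) ^ 2 * ((N : ℝ) * ∑ i, ‖e (t + 1) i ω‖ ^ 2) := by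
            refine mul_le_mul_of_nonneg_left (le_trans h2 h3) (by positivity)
        _ = (N : ℝ)⁻¹ * ∑ i, ‖e (t + 1) i ω‖ ^ 2 := by
            field_simp
    calc (‖(N : ℝ)⁻¹ • ∑ i, e (t + 1) i ω‖₊ : ℝ≥0∞) ^ 2
        = ENNReal.ofReal (‖(N : ℝ)⁻¹ • ∑ i, e (t + 1) i ω‖ ^ 2) := conef_enorm_sq _
      _ ≤ ENNReal.ofReal ((N : ℝ)⁻¹ * ∑ i, ‖e (t + 1) i ω‖ ^ 2) :=
          ENNReal.ofReal_le_ofReal hreal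
      _ = ENNReal.ofReal ((N : ℝ)⁻¹) * ∑ i, (‖e (t + 1) i ω‖₊ : ℝ≥0∞) ^ 2 := by
          rw [ENNReal.ofReal_mul (by positivity),
            ENNReal.ofReal_sum_of_nonneg (fun i _ => sq_nonneg _)]
          congr 1
          exact Finset.sum_congr rfl fun i _ => (conef_enorm_sq _).symm
  calc ∫⁻ ω, (‖(N : ℝ)⁻¹ • ∑ i, e (t + 1) i ω‖₊ : ℝ≥0∞) ^ 2 ∂μ
      ≤ ∫⁻ ω, ENNReal.ofReal ((N : ℝ)⁻¹) * ∑ i, (‖e (t + 1) i ω‖₊ : ℝ≥0∞) ^ 2 ∂μ :=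
        lintegral_mono havg
    _ = ENNReal.ofReal ((N : ℝ)⁻¹) * ∑ i, ∫⁻ ω, (‖e (t + 1) i ω‖₊ : ℝ≥0∞) ^ 2 ∂μ := by
        rw [lintegral_const_mul' _ _ ENNReal.ofReal_ne_top,
          lintegral_finset_sum _ fun i _ => ((heA (t+1) i).nnnorm.coe_nnreal_ennreal).pow_const 2]
    _ ≤ ENNReal.ofReal ((N : ℝ)⁻¹) * ∑ _i : Fin N,
          ENNReal.ofReal (c / ((1 - c) * lam) * η ^ 2 * (σ ^ 2 + G ^ 2)) := by
        refine mul_le_mul_right (Finset.sum_le_sum fun i _ => main (t+1) i) _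
    _ = ENNReal.ofReal ((N : ℝ)⁻¹) * ((N : ℕ)
          * ENNReal.ofReal (c / ((1 - c) * lam) * η ^ 2 * (σ ^ 2 + G ^ 2))) := by
        rw [Finset.sum_const, Finset.card_univ, Fintype.card_fin, nsmul_eq_mul]
    _ = ENNReal.ofReal (c / ((1 - c) * lam) * η ^ 2 * (σ ^ 2 + G ^ 2)) := by
        have hNpos : (0 : ℝ) < (N : ℝ) := Nat.cast_pos.mpr hN
        rw [← mul_assoc, ← ENNReal.ofReal_natCast N,
          ← ENNReal.ofReal_mul (by positivity), inv_mul_cancel₀ hNpos.ne', ENNReal.ofReal_one,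
          one_mul]
end

section
/- Under the iConEF-v1 algorithm (p_t^i = η g_t^i + ẽ_t^i + q_t^i; Δ_t^i = Q(p_t^i); x_{t+1} = x_t − (1/N)Σ_i Δ_t^i; ẽ_{t+1}^i = C(p_t^i − Δ_t^i); q_{t+1}^i = C(p_t^i − Δ_t^i − ẽ_{t+1}^i); ẽ_0^i = q_0^i = 0), with stochastic gradients satisfying E[g_t^i | x_t] = ∇f(x_t), E[||g_t^i − ∇f(x_t)||² | x_t] ≤ σ², E[||∇f(x_t)||²] ≤ G², error compressor C unbiased with E[||C(x) − x||² | x] ≤ θ||x||², and gradient compressor Q satisfying E[||Q(x) − x||² | x] ≤ δ||x||²: if δ = c/((1+λ)(1+θ)²) for some c ∈ (0,1), λ > 0, then writing e_{t+1}^i = ẽ_{t+1}^i + q_{t+1}^i, it holds for every t ≥ 0 that E[|| (1/N) Σ_{i=1}^N e_{t+1}^i ||²] ≤ (c/((1−c)λ)) · η² (σ² + G²). -/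
open MeasureTheory ProbabilityTheory
open scoped ENNReal BigOperators

lemma nnnorm_sq_ofReal {F : Type*} [NormedAddCommGroup F] (v : F) :
    (‖v‖₊ : ℝ≥0∞) ^ 2 = ENNReal.ofReal (‖v‖ ^ 2) := by
  rw [ENNReal.ofReal_pow (norm_nonneg v), ← coe_nnnorm v, ENNReal.ofReal_coe_nnreal]

lemma young_norm_sq {F : Type*} [NormedAddCommGroup F] [InnerProductSpace ℝ F]
    (u w : F) {lam : ℝ} (hlam : 0 < lam) :
    ‖u + w‖ ^ 2 ≤ (1 + lam) * ‖u‖ ^ 2 + (1 + lam⁻¹) * ‖w‖ ^ 2 := by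
  have h := norm_add_sq_real u w
  have hcs := real_inner_le_norm u w
  have hinv : lam * lam⁻¹ = 1 := mul_inv_cancel₀ hlam.ne'
  have h2 : 2 * inner ℝ u w ≤ lam * ‖u‖ ^ 2 + lam⁻¹ * ‖w‖ ^ 2 := by
    have hsq := sq_nonneg (lam * ‖u‖ - ‖w‖)
    have hpos : 0 < lam⁻¹ := inv_pos.mpr hlam
    nlinarith [mul_nonneg hpos.le hsq, norm_nonneg u, norm_nonneg w]
  linarith

lemma lintegral_sq_add_bias {α F : Type*} [MeasurableSpace α]
    [NormedAddCommGroup F] [InnerProductSpace ℝ F]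
    [CompleteSpace F]
    (ν : Measure α) [IsProbabilityMeasure ν] {Y : α → F}
    (hY : AEStronglyMeasurable Y ν) {m : F} (v : F)
    (hmean : ∫ ω, Y ω ∂ν = m) {R : ℝ≥0∞}
    (hvar : ∫⁻ ω, ENNReal.ofReal (‖Y ω - m‖ ^ 2) ∂ν ≤ R) :
    ∫⁻ ω, ENNReal.ofReal (‖v + Y ω‖ ^ 2) ∂ν ≤ ENNReal.ofReal (‖v + m‖ ^ 2) + R := by
  by_cases hfin : ∫⁻ ω, ENNReal.ofReal (‖Y ω - m‖ ^ 2) ∂ν = ∞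
  · have hR : R = ∞ := top_le_iff.mp (hfin ▸ hvar)
    simp [hR]
  · have hZsm : AEStronglyMeasurable (fun ω => Y ω - m) ν :=
      hY.sub aestronglyMeasurable_const
    have hsqsm : AEStronglyMeasurable (fun ω => ‖Y ω - m‖ ^ 2) ν :=
      (continuous_pow 2).comp_aestronglyMeasurable hZsm.norm
    have hint_sq : Integrable (fun ω => ‖Y ω - m‖ ^ 2) ν := by
      refine ⟨hsqsm, ?_⟩
      rw [hasFiniteIntegral_iff_norm]
      have : ∀ ω, ENNReal.ofReal ‖‖Y ω - m‖ ^ 2‖ = ENNReal.ofReal (‖Y ω - m‖ ^ 2) := by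
        intro ω; rw [Real.norm_of_nonneg (sq_nonneg _)]
      simp_rw [this]
      exact lt_top_iff_ne_top.mpr hfin
    have hZ1 : Integrable (fun ω => Y ω - m) ν := by
      refine Integrable.mono' ((integrable_const (1:ℝ)).add hint_sq) hZsm ?_
      filter_upwards with ω
      have := sq_nonneg (‖Y ω - m‖ - 1)
      simp only [Pi.add_apply]
      nlinarith [norm_nonneg (Y ω - m)]
    have hYint : Integrable Y ν := by
      have h' := hZ1.add (integrable_const m)
      exact h'.congr (Filter.Eventually.of_forall fun ω => by simp)
    have hmean0 : ∫ ω, (Y ω - m) ∂ν = 0 := by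
      rw [integral_sub hYint (integrable_const m), hmean, integral_const]
      simp
    have key : ∀ ω, ‖v + Y ω‖ ^ 2
        = ‖v + m‖ ^ 2 + ((inner ℝ ((2:ℝ) • (v + m)) (Y ω - m) : ℝ) + ‖Y ω - m‖ ^ 2) := by
      intro ω
      have hvy : v + Y ω = (v + m) + (Y ω - m) := by abel
      rw [hvy, norm_add_sq_real, real_inner_smul_left]; ring
    have hbr : Integrable
        (fun ω => (inner ℝ ((2:ℝ) • (v + m)) (Y ω - m) : ℝ) + ‖Y ω - m‖ ^ 2) ν :=
      (hZ1.const_inner _).add hint_sq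
    have hint : Integrable (fun ω => ‖v + Y ω‖ ^ 2) ν := by
      have := (integrable_const (‖v + m‖ ^ 2)).add hbr
      refine this.congr ?_
      filter_upwards with ω
      exact (key ω).symm
    have hval : ∫ ω, ‖v + Y ω‖ ^ 2 ∂ν
        = ‖v + m‖ ^ 2 + ∫ ω, ‖Y ω - m‖ ^ 2 ∂ν := by
      simp_rw [key]
      rw [integral_add (integrable_const _) hbr, integral_const, probReal_univ,
        integral_add (hZ1.const_inner _) hint_sq,
        integral_inner hZ1, hmean0, inner_zero_right]
      simp
    calc ∫⁻ ω, ENNReal.ofReal (‖v + Y ω‖ ^ 2) ∂ν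
        = ENNReal.ofReal (∫ ω, ‖v + Y ω‖ ^ 2 ∂ν) :=
          (ofReal_integral_eq_lintegral_ofReal hint
            (Filter.Eventually.of_forall fun ω => sq_nonneg _)).symm
      _ = ENNReal.ofReal (‖v + m‖ ^ 2) + ENNReal.ofReal (∫ ω, ‖Y ω - m‖ ^ 2 ∂ν) := by
          rw [hval, ENNReal.ofReal_add (sq_nonneg _)
            (integral_nonneg fun ω => sq_nonneg _)]
      _ ≤ ENNReal.ofReal (‖v + m‖ ^ 2) + R := by
          gcongr
          calc ENNReal.ofReal (∫ ω, ‖Y ω - m‖ ^ 2 ∂ν)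
              = ∫⁻ ω, ENNReal.ofReal (‖Y ω - m‖ ^ 2) ∂ν :=
                ofReal_integral_eq_lintegral_ofReal hint_sq
                  (Filter.Eventually.of_forall fun ω => sq_nonneg _)
            _ ≤ R := hvar

lemma indepFun_mono' {Ω β β' γ γ' : Type*} [MeasurableSpace Ω]
    [mβ : MeasurableSpace β] [mβ' : MeasurableSpace β']
    [mγ : MeasurableSpace γ] [mγ' : MeasurableSpace γ']
    {μ : Measure Ω} {X : Ω → β} {Y : Ω → γ} {f : Ω → β'} {g : Ω → γ'}
    (h : IndepFun X Y μ)
    (hf : MeasurableSpace.comap f mβ' ≤ MeasurableSpace.comap X mβ)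
    (hg : MeasurableSpace.comap g mγ' ≤ MeasurableSpace.comap Y mγ) :
    IndepFun f g μ := by
  rw [IndepFun_iff_Indep] at h ⊢
  rw [Indep_iff] at h ⊢
  exact fun t1 t2 h1 h2 => h t1 t2 (hf _ h1) (hg _ h2)

/-- The σ-algebra generated by the seeds with time index `< t`. -/
def icoFilt {Ω SP : Type*} [MeasurableSpace SP] {N : ℕ}
    (seed : ℕ → Fin N → Ω → SP) (t : ℕ) : MeasurableSpace Ω :=
  MeasurableSpace.comap
    (fun ω (j : ((Finset.range t ×ˢ (Finset.univ : Finset (Fin N))) : Finset (ℕ × Fin N))) =>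
      seed j.1.1 j.1.2 ω) inferInstance

lemma icoFilt_le {Ω SP : Type*} [MeasurableSpace Ω] [MeasurableSpace SP] {N : ℕ}
    {seed : ℕ → Fin N → Ω → SP} (hmeas : ∀ t i, Measurable (seed t i)) (t : ℕ) :
    icoFilt seed t ≤ ‹MeasurableSpace Ω› :=
  (measurable_pi_lambda _ fun j => hmeas _ _).comap_le

lemma icoFilt_mono {Ω SP : Type*} [MeasurableSpace SP] {N : ℕ}
    (seed : ℕ → Fin N → Ω → SP) {s t : ℕ} (hst : s ≤ t) :
    icoFilt seed s ≤ icoFilt seed t := by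
  have hsub : ∀ j : ℕ × Fin N,
      j ∈ Finset.range s ×ˢ (Finset.univ : Finset (Fin N)) →
      j ∈ Finset.range t ×ˢ (Finset.univ : Finset (Fin N)) := by
    intro j hj
    simp only [Finset.mem_product, Finset.mem_range] at *
    exact ⟨lt_of_lt_of_le hj.1 hst, hj.2⟩
  have hfact : (fun ω (j : ((Finset.range s ×ˢ (Finset.univ : Finset (Fin N))) : Finset (ℕ × Fin N))) =>
        seed j.1.1 j.1.2 ω)
      = (fun (v : ((Finset.range t ×ˢ (Finset.univ : Finset (Fin N))) : Finset (ℕ × Fin N)) → SP)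
          (j : ((Finset.range s ×ˢ (Finset.univ : Finset (Fin N))) : Finset (ℕ × Fin N))) =>
            v ⟨j.1, hsub j.1 j.2⟩)
        ∘ (fun ω (j : ((Finset.range t ×ˢ (Finset.univ : Finset (Fin N))) : Finset (ℕ × Fin N))) =>
            seed j.1.1 j.1.2 ω) := rfl
  unfold icoFilt
  rw [hfact, ← MeasurableSpace.comap_comp]
  exact MeasurableSpace.comap_mono
    (measurable_pi_lambda _ fun j => measurable_pi_apply _).comap_le

lemma icoFilt_seed {Ω SP : Type*} [MeasurableSpace SP] {N : ℕ}
    (seed : ℕ → Fin N → Ω → SP) {s t : ℕ} (i : Fin N) (hst : s < t) :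
    Measurable[icoFilt seed t] (seed s i) := by
  have hmem : ((s, i) : ℕ × Fin N) ∈ Finset.range t ×ˢ (Finset.univ : Finset (Fin N)) := by
    simp [Finset.mem_product, Finset.mem_range, hst]
  have hfact : seed s i
      = (fun (v : ((Finset.range t ×ˢ (Finset.univ : Finset (Fin N))) : Finset (ℕ × Fin N)) → SP) =>
          v ⟨(s, i), hmem⟩)
        ∘ (fun ω (j : ((Finset.range t ×ˢ (Finset.univ : Finset (Fin N))) : Finset (ℕ × Fin N))) =>
            seed j.1.1 j.1.2 ω) := rfl
  rw [hfact]
  exact (measurable_pi_apply _).comp (comap_measurable _)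

lemma icoFilt_indepFun {Ω SP : Type*} [MeasurableSpace Ω] [MeasurableSpace SP] {N : ℕ}
    {seed : ℕ → Fin N → Ω → SP} {μ : Measure Ω}
    (hmeas : ∀ t i, Measurable (seed t i))
    (hindep : iIndepFun
      (fun p : ℕ × Fin N => seed p.1 p.2) μ)
    {β : Type*} [MeasurableSpace β] {h' : Ω → β} (t : ℕ) (i : Fin N)
    (hh : Measurable[icoFilt seed t] h') :
    IndepFun h' (seed t i) μ := by
  have hdis : Disjoint (Finset.range t ×ˢ (Finset.univ : Finset (Fin N)))
      ({(t, i)} : Finset (ℕ × Fin N)) := by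
    simp [Finset.disjoint_singleton_right, Finset.mem_product]
  have base := hindep.indepFun_finset _ _ hdis (fun p => hmeas p.1 p.2)
  refine indepFun_mono' base ?_ ?_
  · exact hh.comap_le
  · have hfact : seed t i
        = (fun (v : (({(t, i)} : Finset (ℕ × Fin N)) : Finset (ℕ × Fin N)) → SP) =>
            v ⟨(t, i), Finset.mem_singleton_self _⟩)
          ∘ (fun a (j : (({(t, i)} : Finset (ℕ × Fin N)) : Finset (ℕ × Fin N))) =>
              seed j.1.1 j.1.2 a) := rfl
    rw [hfact, ← MeasurableSpace.comap_comp]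
    exact MeasurableSpace.comap_mono (measurable_pi_apply _).comap_le

set_option maxHeartbeats 1000000 in
/-- **iConEF-v1 error-energy bound (Lemma 3).**
Under iConEF-v1 (`p t i = η • g t i + ẽ t i + q t i`, `Δ t i = Q (p t i)`,
`x (t+1) = x t - (1/N) • ∑ i, Δ t i`, `ẽ (t+1) i = C (p t i - Δ t i)`,
`q (t+1) i = C (p t i - Δ t i - ẽ (t+1) i)`, `ẽ 0 i = q 0 i = 0`), with unbiased
stochastic gradients of variance `≤ σ²` and `E[‖∇f(x t)‖²] ≤ G²`, an unbiased error
compressor `C` with `E[‖C a - a‖²|a] ≤ θ‖a‖²`, and a gradient compressor `Q` with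
`E[‖Q a - a‖²|a] ≤ δ‖a‖²` where `δ = c/((1+λ)(1+θ)²)` for some `c ∈ (0,1)`, `λ > 0`:
writing `e (t+1) i = ẽ (t+1) i + q (t+1) i`, for every `t ≥ 0`,
`E[‖(1/N) ∑ i, e (t+1) i‖²] ≤ (c/((1-c)λ)) η² (σ² + G²)`. -/
theorem iconef_v1_error_energy_bound
    (d N : ℕ) (hN : 0 < N)
    (σ G δ θ c lam η : ℝ)
    (hσ : 0 ≤ σ) (hG : 0 ≤ G) (hθ : 0 ≤ θ)
    (hδ0 : 0 < δ) (hδ1 : δ < 1) (hc : c ∈ Set.Ioo (0 : ℝ) 1) (hlam : 0 < lam)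
    (hδeq : δ = c / ((1 + lam) * (1 + θ) ^ 2))
    (hη : 0 < η)
    (f : EuclideanSpace ℝ (Fin d) → ℝ) (hf : Differentiable ℝ f)
    -- seed spaces for the stochastic gradients and the compressor calls
    {Ωg ΩQ ΩC : Type} [MeasurableSpace Ωg] [MeasurableSpace ΩQ] [MeasurableSpace ΩC]
    (νg : Measure Ωg) (νQ : Measure ΩQ) (νC : Measure ΩC)
    [IsProbabilityMeasure νg] [IsProbabilityMeasure νQ] [IsProbabilityMeasure νC]
    (G' : ℕ → Fin N → EuclideanSpace ℝ (Fin d) → Ωg → EuclideanSpace ℝ (Fin d))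
    (Q : EuclideanSpace ℝ (Fin d) → ΩQ → EuclideanSpace ℝ (Fin d))
    (C : EuclideanSpace ℝ (Fin d) → ΩC → EuclideanSpace ℝ (Fin d))
    (hGmeas : ∀ t i, Measurable (Function.uncurry (G' t i)))
    (hQmeas : Measurable (Function.uncurry Q))
    (hCmeas : Measurable (Function.uncurry C))
    -- Assumption 2: unbiased stochastic gradients with bounded variance
    (hGmean : ∀ t i a, ∫ ω, G' t i a ω ∂νg = gradient f a)
    (hGvar : ∀ t i a,
      ∫⁻ ω, (‖G' t i a ω - gradient f a‖₊ : ℝ≥0∞) ^ 2 ∂νg ≤ ENNReal.ofReal (σ ^ 2))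
    -- Assumption 4: contractive gradient compressor
    (hQvar : ∀ a, ∫⁻ ω, (‖Q a ω - a‖₊ : ℝ≥0∞) ^ 2 ∂νQ ≤ ENNReal.ofReal (δ * ‖a‖ ^ 2))
    -- Assumption 3: unbiased error compressor
    (hCmean : ∀ a, ∫ ω, C a ω ∂νC = a)
    (hCvar : ∀ a, ∫⁻ ω, (‖C a ω - a‖₊ : ℝ≥0∞) ^ 2 ∂νC ≤ ENNReal.ofReal (θ * ‖a‖ ^ 2))
    -- the underlying sample space carrying i.i.d. fresh seeds for every (t, i):
    -- one gradient seed, one Q seed, and two independent C seeds per step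
    {Ω : Type} [MeasurableSpace Ω] (μ : Measure Ω) [IsProbabilityMeasure μ]
    (seed : ℕ → Fin N → Ω → Ωg × ΩQ × ΩC × ΩC)
    (hseedMeas : ∀ t i, Measurable (seed t i))
    (hseedLaw : ∀ t i, Measure.map (seed t i) μ = νg.prod (νQ.prod (νC.prod νC)))
    (hseedIndep : iIndepFun
      (fun q : ℕ × Fin N => seed q.1 q.2) μ)
    -- the iConEF-v1 trajectories
    (x0 : EuclideanSpace ℝ (Fin d))
    (x : ℕ → Ω → EuclideanSpace ℝ (Fin d))
    (et q g p Δ : ℕ → Fin N → Ω → EuclideanSpace ℝ (Fin d))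
    (hx0 : ∀ ω, x 0 ω = x0)
    (het0 : ∀ i ω, et 0 i ω = 0)
    (hq0 : ∀ i ω, q 0 i ω = 0)
    (hg : ∀ t i ω, g t i ω = G' t i (x t ω) (seed t i ω).1)
    (hp : ∀ t i ω, p t i ω = η • g t i ω + et t i ω + q t i ω)
    (hΔ : ∀ t i ω, Δ t i ω = Q (p t i ω) (seed t i ω).2.1)
    (hx : ∀ t ω, x (t + 1) ω = x t ω - (N : ℝ)⁻¹ • ∑ i, Δ t i ω)
    (het : ∀ t i ω, et (t + 1) i ω = C (p t i ω - Δ t i ω) (seed t i ω).2.2.1)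
    (hq : ∀ t i ω,
      q (t + 1) i ω = C (p t i ω - Δ t i ω - et (t + 1) i ω) (seed t i ω).2.2.2)
    -- Assumption 2: bounded expected squared gradient norm
    (hgradbound : ∀ t,
      ∫⁻ ω, (‖gradient f (x t ω)‖₊ : ℝ≥0∞) ^ 2 ∂μ ≤ ENNReal.ofReal (G ^ 2)) :
    ∀ t : ℕ,
      ∫⁻ ω, (‖(N : ℝ)⁻¹ • ∑ i, (et (t + 1) i ω + q (t + 1) i ω)‖₊ : ℝ≥0∞) ^ 2 ∂μ
        ≤ ENNReal.ofReal ((c / ((1 - c) * lam)) * η ^ 2 * (σ ^ 2 + G ^ 2)) := by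
  classical
  -- ambient measurability of the gradient
  have hgradmeas : Measurable (fun a : EuclideanSpace ℝ (Fin d) => gradient f a) := by
    have h1 : Measurable (fderiv ℝ f) := measurable_fderiv ℝ f
    have h2 : Continuous fun L : (EuclideanSpace ℝ (Fin d)) →L[ℝ] ℝ =>
        (InnerProductSpace.toDual ℝ (EuclideanSpace ℝ (Fin d))).symm L :=
      (InnerProductSpace.toDual ℝ _).symm.continuous
    exact h2.measurable.comp h1
  -- measurability of the trajectories w.r.t. the seed filtration
  have hFmeas : ∀ t : ℕ, Measurable[icoFilt seed t] (x t) ∧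
      ∀ i : Fin N, Measurable[icoFilt seed t] (et t i) ∧ Measurable[icoFilt seed t] (q t i) := by
    intro t
    induction t with
    | zero =>
      refine ⟨?_, fun i => ⟨?_, ?_⟩⟩
      · rw [show x 0 = fun _ => x0 from funext (hx0)]; exact measurable_const
      · rw [show et 0 i = fun _ => (0 : EuclideanSpace ℝ (Fin d)) from funext (het0 i)]
        exact measurable_const
      · rw [show q 0 i = fun _ => (0 : EuclideanSpace ℝ (Fin d)) from funext (hq0 i)]
        exact measurable_const
    | succ t ih =>
      obtain ⟨hxt, hetq⟩ := ih
      have hle := icoFilt_mono seed (Nat.le_succ t)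
      have hxt' : Measurable[icoFilt seed (t+1)] (x t) := hxt.mono hle le_rfl
      have het' : ∀ i, Measurable[icoFilt seed (t+1)] (et t i) :=
        fun i => (hetq i).1.mono hle le_rfl
      have hq' : ∀ i, Measurable[icoFilt seed (t+1)] (q t i) :=
        fun i => (hetq i).2.mono hle le_rfl
      have hseedt : ∀ i, Measurable[icoFilt seed (t+1)] (seed t i) :=
        fun i => icoFilt_seed seed i (Nat.lt_succ_self t)
      have hgt : ∀ i, Measurable[icoFilt seed (t+1)] (g t i) := by
        intro i
        rw [show g t i = fun ω => Function.uncurry (G' t i) (x t ω, (seed t i ω).1)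
          from funext (hg t i)]
        exact (hGmeas t i).comp (hxt'.prodMk (measurable_fst.comp (hseedt i)))
      have hpt : ∀ i, Measurable[icoFilt seed (t+1)] (p t i) := by
        intro i
        rw [show p t i = fun ω => η • g t i ω + et t i ω + q t i ω from funext (hp t i)]
        exact (((hgt i).const_smul η).add (het' i)).add (hq' i)
      have hΔt : ∀ i, Measurable[icoFilt seed (t+1)] (Δ t i) := by
        intro i
        rw [show Δ t i = fun ω => Function.uncurry Q (p t i ω, (seed t i ω).2.1)
          from funext (hΔ t i)]
        exact hQmeas.comp ((hpt i).prodMk (measurable_fst.comp (measurable_snd.comp (hseedt i))))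
      have hett : ∀ i, Measurable[icoFilt seed (t+1)] (et (t+1) i) := by
        intro i
        rw [show et (t+1) i = fun ω => Function.uncurry C (p t i ω - Δ t i ω, (seed t i ω).2.2.1)
          from funext (het t i)]
        exact hCmeas.comp (((hpt i).sub (hΔt i)).prodMk
          (measurable_fst.comp (measurable_snd.comp (measurable_snd.comp (hseedt i)))))
      refine ⟨?_, fun i => ⟨hett i, ?_⟩⟩
      · rw [show x (t+1) = fun ω => x t ω - (N : ℝ)⁻¹ • ∑ i, Δ t i ω from funext (hx t)]
        exact hxt'.sub ((Finset.measurable_sum Finset.univ fun i _ => hΔt i).const_smul ((N : ℝ)⁻¹))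
      · rw [show q (t+1) i = fun ω =>
            Function.uncurry C (p t i ω - Δ t i ω - et (t+1) i ω, (seed t i ω).2.2.2)
          from funext (hq t i)]
        exact hCmeas.comp ((((hpt i).sub (hΔt i)).sub (hett i)).prodMk
          (measurable_snd.comp (measurable_snd.comp (measurable_snd.comp (hseedt i)))))
  have hxm : ∀ t, Measurable (x t) :=
    fun t => ((hFmeas t).1).mono (icoFilt_le hseedMeas t) le_rfl
  have hetm : ∀ t i, Measurable (et t i) :=
    fun t i => (((hFmeas t).2 i).1).mono (icoFilt_le hseedMeas t) le_rfl
  have hqm : ∀ t i, Measurable (q t i) :=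
    fun t i => (((hFmeas t).2 i).2).mono (icoFilt_le hseedMeas t) le_rfl
  -- the per-worker error energy
  set A : ℕ → Fin N → ℝ≥0∞ := fun t i =>
    ∫⁻ ω, ENNReal.ofReal (‖et t i ω + q t i ω‖ ^ 2) ∂μ with hAdef
  have hA0 : ∀ i, A 0 i = 0 := by
    intro i
    simp only [hAdef]
    have : ∀ ω, ENNReal.ofReal (‖et 0 i ω + q 0 i ω‖ ^ 2) = 0 := by
      intro ω; rw [het0, hq0]; simp
    simp [this]
  have hstep : ∀ (t : ℕ) (i : Fin N),
      A (t+1) i ≤ ENNReal.ofReal c * A t i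
        + ENNReal.ofReal ((c / lam) * η ^ 2 * (σ ^ 2 + G ^ 2)) := by
    intro t i
    have hgradG2 : ∫⁻ ω, ENNReal.ofReal (‖gradient f (x t ω)‖ ^ 2) ∂μ ≤ ENNReal.ofReal (G ^ 2) := by
      have h := hgradbound t
      simp only [nnnorm_sq_ofReal] at h
      exact h
    have hCvar' : ∀ a : EuclideanSpace ℝ (Fin d), ∫⁻ ω, ENNReal.ofReal (‖C a ω - a‖ ^ 2) ∂νC
        ≤ ENNReal.ofReal θ * ENNReal.ofReal (‖a‖ ^ 2) := by
      intro a
      have h := hCvar a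
      simp only [nnnorm_sq_ofReal] at h
      rw [ENNReal.ofReal_mul hθ] at h
      exact h
    have hCvar2 : ∀ a : EuclideanSpace ℝ (Fin d), ∫⁻ ω, ENNReal.ofReal (‖a - C a ω‖ ^ 2) ∂νC
        ≤ ENNReal.ofReal θ * ENNReal.ofReal (‖a‖ ^ 2) := by
      intro a
      calc ∫⁻ ω, ENNReal.ofReal (‖a - C a ω‖ ^ 2) ∂νC
          = ∫⁻ ω, ENNReal.ofReal (‖C a ω - a‖ ^ 2) ∂νC :=
            lintegral_congr fun ω => by rw [norm_sub_rev]
        _ ≤ ENNReal.ofReal θ * ENNReal.ofReal (‖a‖ ^ 2) := hCvar' a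
    have hQvar' : ∀ a : EuclideanSpace ℝ (Fin d), ∫⁻ ω, ENNReal.ofReal (‖a - Q a ω‖ ^ 2) ∂νQ
        ≤ ENNReal.ofReal δ * ENNReal.ofReal (‖a‖ ^ 2) := by
      intro a
      have h := hQvar a
      simp only [nnnorm_sq_ofReal] at h
      rw [ENNReal.ofReal_mul hδ0.le] at h
      calc ∫⁻ ω, ENNReal.ofReal (‖a - Q a ω‖ ^ 2) ∂νQ
          = ∫⁻ ω, ENNReal.ofReal (‖Q a ω - a‖ ^ 2) ∂νQ :=
            lintegral_congr fun ω => by rw [norm_sub_rev]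
        _ ≤ ENNReal.ofReal δ * ENNReal.ofReal (‖a‖ ^ 2) := h
    have hGvar' : ∀ a : EuclideanSpace ℝ (Fin d), ∫⁻ s, ENNReal.ofReal (‖G' t i a s - gradient f a‖ ^ 2) ∂νg
        ≤ ENNReal.ofReal (σ ^ 2) := by
      intro a
      have h := hGvar t i a
      simp only [nnnorm_sq_ofReal] at h
      exact h
    -- Step I: innermost compressor call
    have hI : ∀ a w : EuclideanSpace ℝ (Fin d),
        ∫⁻ s4, ENNReal.ofReal (‖w + C (a - w) s4‖ ^ 2) ∂νC
          ≤ ENNReal.ofReal (‖a‖ ^ 2) + ENNReal.ofReal θ * ENNReal.ofReal (‖a - w‖ ^ 2) := by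
      intro a w
      have hYm : AEStronglyMeasurable (fun s4 => C (a - w) s4) νC :=
        (hCmeas.comp (measurable_const.prodMk measurable_id)).aestronglyMeasurable
      have hb := lintegral_sq_add_bias νC hYm w (hCmean (a - w)) (hCvar' (a - w))
      have hid : w + (a - w) = a := by abel
      rw [hid] at hb
      exact hb
    -- Step II+III
    have hIII : ∀ a : EuclideanSpace ℝ (Fin d),
        ∫⁻ s3, ∫⁻ s4, ENNReal.ofReal (‖C a s3 + C (a - C a s3) s4‖ ^ 2) ∂νC ∂νC
          ≤ ENNReal.ofReal ((1 + θ ^ 2) * ‖a‖ ^ 2) := by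
      intro a
      refine le_trans (lintegral_mono fun s3 => hI a (C a s3)) ?_
      rw [lintegral_add_left measurable_const, lintegral_const, measure_univ, mul_one,
        lintegral_const_mul' _ _ ENNReal.ofReal_ne_top]
      calc ENNReal.ofReal (‖a‖ ^ 2)
            + ENNReal.ofReal θ * ∫⁻ s3, ENNReal.ofReal (‖a - C a s3‖ ^ 2) ∂νC
          ≤ ENNReal.ofReal (‖a‖ ^ 2)
            + ENNReal.ofReal θ * (ENNReal.ofReal θ * ENNReal.ofReal (‖a‖ ^ 2)) := by
            gcongr
            exact hCvar2 a
        _ = ENNReal.ofReal ((1 + θ ^ 2) * ‖a‖ ^ 2) := by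
            rw [← ENNReal.ofReal_mul hθ, ← ENNReal.ofReal_mul hθ,
              ← ENNReal.ofReal_add (sq_nonneg _) (by positivity)]
            congr 1
            ring
    -- Step IV
    have hIV : ∀ pv : EuclideanSpace ℝ (Fin d),
        ∫⁻ s2, ∫⁻ s3, ∫⁻ s4, ENNReal.ofReal
            (‖C (pv - Q pv s2) s3 + C ((pv - Q pv s2) - C (pv - Q pv s2) s3) s4‖ ^ 2) ∂νC ∂νC ∂νQ
          ≤ ENNReal.ofReal ((1 + θ ^ 2) * δ) * ENNReal.ofReal (‖pv‖ ^ 2) := by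
      intro pv
      refine le_trans (lintegral_mono fun s2 => hIII (pv - Q pv s2)) ?_
      have h1θ : (0:ℝ) ≤ 1 + θ ^ 2 := by positivity
      simp_rw [ENNReal.ofReal_mul h1θ]
      rw [lintegral_const_mul' _ _ ENNReal.ofReal_ne_top, mul_assoc]
      exact mul_le_mul_right (hQvar' pv) _
    -- Step V: gradient seed level
    have hV : ∀ z : EuclideanSpace ℝ (Fin d) × EuclideanSpace ℝ (Fin d),
        ∫⁻ s1, ENNReal.ofReal (‖η • G' t i z.1 s1 + z.2‖ ^ 2) ∂νg
          ≤ ENNReal.ofReal ((1 + lam) * ‖z.2‖ ^ 2 + (1 + lam⁻¹) * (η ^ 2 * ‖gradient f z.1‖ ^ 2))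
            + ENNReal.ofReal (η ^ 2 * σ ^ 2) := by
      intro z
      have hYsm : AEStronglyMeasurable (fun s1 => η • G' t i z.1 s1) νg :=
        (((hGmeas t i).comp (measurable_const.prodMk measurable_id)).const_smul η).aestronglyMeasurable
      have hmean : ∫ s1, η • G' t i z.1 s1 ∂νg = η • gradient f z.1 := by
        rw [integral_smul, hGmean t i z.1]
      have hvar : ∫⁻ s1, ENNReal.ofReal (‖η • G' t i z.1 s1 - η • gradient f z.1‖ ^ 2) ∂νg
          ≤ ENNReal.ofReal (η ^ 2 * σ ^ 2) := by
        have heq : ∀ s1, ‖η • G' t i z.1 s1 - η • gradient f z.1‖ ^ 2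
            = η ^ 2 * ‖G' t i z.1 s1 - gradient f z.1‖ ^ 2 := by
          intro s1
          rw [← smul_sub, norm_smul, Real.norm_eq_abs, mul_pow, sq_abs]
        simp_rw [heq, ENNReal.ofReal_mul (sq_nonneg η)]
        rw [lintegral_const_mul' _ _ ENNReal.ofReal_ne_top]
        exact mul_le_mul_right (hGvar' z.1) _
      have hcomm : ∀ s1 : Ωg, ‖η • G' t i z.1 s1 + z.2‖ = ‖z.2 + η • G' t i z.1 s1‖ := by
        intro s1; rw [add_comm]
      simp_rw [hcomm]
      refine le_trans (lintegral_sq_add_bias νg hYsm z.2 hmean hvar) ?_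
      gcongr
      have hy := young_norm_sq z.2 (η • gradient f z.1) hlam
      have hsm : ‖η • gradient f z.1‖ ^ 2 = η ^ 2 * ‖gradient f z.1‖ ^ 2 := by
        rw [norm_smul, Real.norm_eq_abs, mul_pow, sq_abs]
      rw [hsm] at hy
      exact hy
    -- coefficient comparison
    have hcl : (0:ℝ) ≤ c / (1 + lam) := div_nonneg hc.1.le (by linarith)
    have hcoef : (1 + θ ^ 2) * δ ≤ c / (1 + lam) := by
      have h1θ2 : (1:ℝ) + θ ^ 2 ≤ (1 + θ) ^ 2 := by nlinarith
      have hD : (0:ℝ) < (1 + lam) * (1 + θ) ^ 2 := by positivity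
      have hplam : (0:ℝ) < 1 + lam := by linarith
      have hkey := mul_le_mul_of_nonneg_left h1θ2 (mul_nonneg hc.1.le hplam.le)
      rw [hδeq,
        show (1 + θ ^ 2) * (c / ((1 + lam) * (1 + θ) ^ 2))
          = ((1 + θ ^ 2) * c) / ((1 + lam) * (1 + θ) ^ 2) from (mul_div_assoc _ _ _).symm,
        div_le_div_iff₀ hD hplam]
      nlinarith [hkey]
    -- measurability of the full integrand
    have hΦm : Measurable (fun w : (EuclideanSpace ℝ (Fin d) × EuclideanSpace ℝ (Fin d)) × (Ωg × ΩQ × ΩC × ΩC) => ENNReal.ofReal (‖C ((η • G' t i w.1.1 w.2.1 + w.1.2) - Q (η • G' t i w.1.1 w.2.1 + w.1.2) w.2.2.1) w.2.2.2.1 + C (((η • G' t i w.1.1 w.2.1 + w.1.2) - Q (η • G' t i w.1.1 w.2.1 + w.1.2) w.2.2.1) - C ((η • G' t i w.1.1 w.2.1 + w.1.2) - Q (η • G' t i w.1.1 w.2.1 + w.1.2) w.2.2.1) w.2.2.2.1) w.2.2.2.2‖ ^ 2)) := by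
      have mG : Measurable (fun w : (EuclideanSpace ℝ (Fin d) × EuclideanSpace ℝ (Fin d)) × (Ωg × ΩQ × ΩC × ΩC) => (η • G' t i w.1.1 w.2.1 + w.1.2)) :=
        (((hGmeas t i).comp ((measurable_fst.fst).prodMk measurable_snd.fst)).const_smul η).add
          measurable_fst.snd
      have mA : Measurable (fun w : (EuclideanSpace ℝ (Fin d) × EuclideanSpace ℝ (Fin d)) × (Ωg × ΩQ × ΩC × ΩC) => (η • G' t i w.1.1 w.2.1 + w.1.2) - Q (η • G' t i w.1.1 w.2.1 + w.1.2) w.2.2.1) :=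
        mG.sub (hQmeas.comp (mG.prodMk measurable_snd.snd.fst))
      have mC1 : Measurable (fun w : (EuclideanSpace ℝ (Fin d) × EuclideanSpace ℝ (Fin d)) × (Ωg × ΩQ × ΩC × ΩC) => C ((η • G' t i w.1.1 w.2.1 + w.1.2) - Q (η • G' t i w.1.1 w.2.1 + w.1.2) w.2.2.1) w.2.2.2.1) :=
        hCmeas.comp (mA.prodMk measurable_snd.snd.snd.fst)
      have mC2 : Measurable (fun w : (EuclideanSpace ℝ (Fin d) × EuclideanSpace ℝ (Fin d)) × (Ωg × ΩQ × ΩC × ΩC) => C (((η • G' t i w.1.1 w.2.1 + w.1.2) - Q (η • G' t i w.1.1 w.2.1 + w.1.2) w.2.2.1) - C ((η • G' t i w.1.1 w.2.1 + w.1.2) - Q (η • G' t i w.1.1 w.2.1 + w.1.2) w.2.2.1) w.2.2.2.1) w.2.2.2.2) :=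
        hCmeas.comp ((mA.sub mC1).prodMk measurable_snd.snd.snd.snd)
      exact ((mC1.add mC2).norm.pow_const 2).ennreal_ofReal
    -- trajectory pair measurability and independence
    have hhm : Measurable (fun ω => (x t ω, et t i ω + q t i ω)) := (hxm t).prodMk ((hetm t i).add (hqm t i))
    have hIndep : IndepFun (fun ω => (x t ω, et t i ω + q t i ω)) (seed t i) μ :=
      icoFilt_indepFun hseedMeas hseedIndep t i
        (((hFmeas t).1).prodMk ((((hFmeas t).2 i).1).add (((hFmeas t).2 i).2)))
    have hjoint : μ.map (fun ω => ((x t ω, et t i ω + q t i ω), seed t i ω)) = (μ.map (fun ω => (x t ω, et t i ω + q t i ω))).prod (νg.prod (νQ.prod (νC.prod νC))) := by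
      rw [← hseedLaw t i]
      exact (indepFun_iff_map_prod_eq_prod_map_map hhm.aemeasurable
        (hseedMeas t i).aemeasurable).mp hIndep
    haveI hκP : IsProbabilityMeasure (μ.map (fun ω => (x t ω, et t i ω + q t i ω))) := Measure.isProbabilityMeasure_map hhm.aemeasurable
    -- pointwise identity
    have hpt : ∀ ω, ENNReal.ofReal (‖et (t+1) i ω + q (t+1) i ω‖ ^ 2)
        = (fun w : (EuclideanSpace ℝ (Fin d) × EuclideanSpace ℝ (Fin d)) × (Ωg × ΩQ × ΩC × ΩC) => ENNReal.ofReal (‖C ((η • G' t i w.1.1 w.2.1 + w.1.2) - Q (η • G' t i w.1.1 w.2.1 + w.1.2) w.2.2.1) w.2.2.2.1 + C (((η • G' t i w.1.1 w.2.1 + w.1.2) - Q (η • G' t i w.1.1 w.2.1 + w.1.2) w.2.2.1) - C ((η • G' t i w.1.1 w.2.1 + w.1.2) - Q (η • G' t i w.1.1 w.2.1 + w.1.2) w.2.2.1) w.2.2.2.1) w.2.2.2.2‖ ^ 2)) ((x t ω, et t i ω + q t i ω), seed t i ω) := by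
      intro ω
      have hpω : p t i ω = η • G' t i (x t ω) (seed t i ω).1 + (et t i ω + q t i ω) := by
        rw [hp t i ω, hg t i ω, add_assoc]
      rw [hq t i ω, het t i ω, hΔ t i ω, hpω]
    -- master rewrite
    have hmaster : A (t+1) i = ∫⁻ z, ∫⁻ s, (fun w : (EuclideanSpace ℝ (Fin d) × EuclideanSpace ℝ (Fin d)) × (Ωg × ΩQ × ΩC × ΩC) => ENNReal.ofReal (‖C ((η • G' t i w.1.1 w.2.1 + w.1.2) - Q (η • G' t i w.1.1 w.2.1 + w.1.2) w.2.2.1) w.2.2.2.1 + C (((η • G' t i w.1.1 w.2.1 + w.1.2) - Q (η • G' t i w.1.1 w.2.1 + w.1.2) w.2.2.1) - C ((η • G' t i w.1.1 w.2.1 + w.1.2) - Q (η • G' t i w.1.1 w.2.1 + w.1.2) w.2.2.1) w.2.2.2.1) w.2.2.2.2‖ ^ 2)) (z, s) ∂(νg.prod (νQ.prod (νC.prod νC))) ∂(μ.map (fun ω => (x t ω, et t i ω + q t i ω))) := by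
      have e0 : A (t+1) i = ∫⁻ ω, (fun w : (EuclideanSpace ℝ (Fin d) × EuclideanSpace ℝ (Fin d)) × (Ωg × ΩQ × ΩC × ΩC) => ENNReal.ofReal (‖C ((η • G' t i w.1.1 w.2.1 + w.1.2) - Q (η • G' t i w.1.1 w.2.1 + w.1.2) w.2.2.1) w.2.2.2.1 + C (((η • G' t i w.1.1 w.2.1 + w.1.2) - Q (η • G' t i w.1.1 w.2.1 + w.1.2) w.2.2.1) - C ((η • G' t i w.1.1 w.2.1 + w.1.2) - Q (η • G' t i w.1.1 w.2.1 + w.1.2) w.2.2.1) w.2.2.2.1) w.2.2.2.2‖ ^ 2)) ((x t ω, et t i ω + q t i ω), seed t i ω) ∂μ := by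
        simp only [hAdef]
        exact lintegral_congr hpt
      have e1 : ∫⁻ ω, (fun w : (EuclideanSpace ℝ (Fin d) × EuclideanSpace ℝ (Fin d)) × (Ωg × ΩQ × ΩC × ΩC) => ENNReal.ofReal (‖C ((η • G' t i w.1.1 w.2.1 + w.1.2) - Q (η • G' t i w.1.1 w.2.1 + w.1.2) w.2.2.1) w.2.2.2.1 + C (((η • G' t i w.1.1 w.2.1 + w.1.2) - Q (η • G' t i w.1.1 w.2.1 + w.1.2) w.2.2.1) - C ((η • G' t i w.1.1 w.2.1 + w.1.2) - Q (η • G' t i w.1.1 w.2.1 + w.1.2) w.2.2.1) w.2.2.2.1) w.2.2.2.2‖ ^ 2)) ((x t ω, et t i ω + q t i ω), seed t i ω) ∂μ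
          = ∫⁻ w, (fun w : (EuclideanSpace ℝ (Fin d) × EuclideanSpace ℝ (Fin d)) × (Ωg × ΩQ × ΩC × ΩC) => ENNReal.ofReal (‖C ((η • G' t i w.1.1 w.2.1 + w.1.2) - Q (η • G' t i w.1.1 w.2.1 + w.1.2) w.2.2.1) w.2.2.2.1 + C (((η • G' t i w.1.1 w.2.1 + w.1.2) - Q (η • G' t i w.1.1 w.2.1 + w.1.2) w.2.2.1) - C ((η • G' t i w.1.1 w.2.1 + w.1.2) - Q (η • G' t i w.1.1 w.2.1 + w.1.2) w.2.2.1) w.2.2.2.1) w.2.2.2.2‖ ^ 2)) w ∂(μ.map (fun ω => ((x t ω, et t i ω + q t i ω), seed t i ω))) :=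
        (lintegral_map hΦm (hhm.prodMk (hseedMeas t i))).symm
      have e2 : ∫⁻ w, (fun w : (EuclideanSpace ℝ (Fin d) × EuclideanSpace ℝ (Fin d)) × (Ωg × ΩQ × ΩC × ΩC) => ENNReal.ofReal (‖C ((η • G' t i w.1.1 w.2.1 + w.1.2) - Q (η • G' t i w.1.1 w.2.1 + w.1.2) w.2.2.1) w.2.2.2.1 + C (((η • G' t i w.1.1 w.2.1 + w.1.2) - Q (η • G' t i w.1.1 w.2.1 + w.1.2) w.2.2.1) - C ((η • G' t i w.1.1 w.2.1 + w.1.2) - Q (η • G' t i w.1.1 w.2.1 + w.1.2) w.2.2.1) w.2.2.2.1) w.2.2.2.2‖ ^ 2)) w ∂(μ.map (fun ω => ((x t ω, et t i ω + q t i ω), seed t i ω))) = ∫⁻ w, (fun w : (EuclideanSpace ℝ (Fin d) × EuclideanSpace ℝ (Fin d)) × (Ωg × ΩQ × ΩC × ΩC) => ENNReal.ofReal (‖C ((η • G' t i w.1.1 w.2.1 + w.1.2) - Q (η • G' t i w.1.1 w.2.1 + w.1.2) w.2.2.1) w.2.2.2.1 + C (((η • G' t i w.1.1 w.2.1 + w.1.2)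 - Q (η • G' t i w.1.1 w.2.1 + w.1.2) w.2.2.1) - C ((η • G' t i w.1.1 w.2.1 + w.1.2) - Q (η • G' t i w.1.1 w.2.1 + w.1.2) w.2.2.1) w.2.2.2.1) w.2.2.2.2‖ ^ 2)) w ∂((μ.map (fun ω => (x t ω, et t i ω + q t i ω))).prod (νg.prod (νQ.prod (νC.prod νC)))) := by
        rw [hjoint]
      have e3 : ∫⁻ w, (fun w : (EuclideanSpace ℝ (Fin d) × EuclideanSpace ℝ (Fin d)) × (Ωg × ΩQ × ΩC × ΩC) => ENNReal.ofReal (‖C ((η • G' t i w.1.1 w.2.1 + w.1.2) - Q (η • G' t i w.1.1 w.2.1 + w.1.2) w.2.2.1) w.2.2.2.1 + C (((η • G' t i w.1.1 w.2.1 + w.1.2) - Q (η • G' t i w.1.1 w.2.1 + w.1.2) w.2.2.1) - C ((η • G' t i w.1.1 w.2.1 + w.1.2) - Q (η • G' t i w.1.1 w.2.1 + w.1.2) w.2.2.1) w.2.2.2.1) w.2.2.2.2‖ ^ 2)) w ∂((μ.map (fun ω => (x t ω, et t i ω + q t i ω))).prod (νg.prod (νQ.prod (νC.prod νC))))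
          = ∫⁻ z, ∫⁻ s, (fun w : (EuclideanSpace ℝ (Fin d) × EuclideanSpace ℝ (Fin d)) × (Ωg × ΩQ × ΩC × ΩC) => ENNReal.ofReal (‖C ((η • G' t i w.1.1 w.2.1 + w.1.2) - Q (η • G' t i w.1.1 w.2.1 + w.1.2) w.2.2.1) w.2.2.2.1 + C (((η • G' t i w.1.1 w.2.1 + w.1.2) - Q (η • G' t i w.1.1 w.2.1 + w.1.2) w.2.2.1) - C ((η • G' t i w.1.1 w.2.1 + w.1.2) - Q (η • G' t i w.1.1 w.2.1 + w.1.2) w.2.2.1) w.2.2.2.1) w.2.2.2.2‖ ^ 2)) (z, s) ∂(νg.prod (νQ.prod (νC.prod νC))) ∂(μ.map (fun ω => (x t ω, et t i ω + q t i ω))) :=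
        lintegral_prod _ hΦm.aemeasurable
      rw [e0, e1, e2, e3]
    -- inner bound
    have hinner : ∀ z : EuclideanSpace ℝ (Fin d) × EuclideanSpace ℝ (Fin d),
        ∫⁻ s, (fun w : (EuclideanSpace ℝ (Fin d) × EuclideanSpace ℝ (Fin d)) × (Ωg × ΩQ × ΩC × ΩC) => ENNReal.ofReal (‖C ((η • G' t i w.1.1 w.2.1 + w.1.2) - Q (η • G' t i w.1.1 w.2.1 + w.1.2) w.2.2.1) w.2.2.2.1 + C (((η • G' t i w.1.1 w.2.1 + w.1.2) - Q (η • G' t i w.1.1 w.2.1 + w.1.2) w.2.2.1) - C ((η • G' t i w.1.1 w.2.1 + w.1.2) - Q (η • G' t i w.1.1 w.2.1 + w.1.2) w.2.2.1) w.2.2.2.1) w.2.2.2.2‖ ^ 2)) (z, s) ∂(νg.prod (νQ.prod (νC.prod νC))) ≤ ENNReal.ofReal (c * ‖z.2‖ ^ 2 + (c * η ^ 2 / lam) * ‖gradient f z.1‖ ^ 2 + (c / (1 + lam)) * (η ^ 2 * σ ^ 2)) := by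
      intro z
      have hs1 : Measurable (fun s : Ωg × ΩQ × ΩC × ΩC => (fun w : (EuclideanSpace ℝ (Fin d) × EuclideanSpace ℝ (Fin d)) × (Ωg × ΩQ × ΩC × ΩC) => ENNReal.ofReal (‖C ((η • G' t i w.1.1 w.2.1 + w.1.2) - Q (η • G' t i w.1.1 w.2.1 + w.1.2) w.2.2.1) w.2.2.2.1 + C (((η • G' t i w.1.1 w.2.1 + w.1.2) - Q (η • G' t i w.1.1 w.2.1 + w.1.2) w.2.2.1) - C ((η • G' t i w.1.1 w.2.1 + w.1.2) - Q (η • G' t i w.1.1 w.2.1 + w.1.2) w.2.2.1) w.2.2.2.1) w.2.2.2.2‖ ^ 2)) (z, s)) :=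
        hΦm.comp (measurable_const.prodMk measurable_id)
      have e1 : ∫⁻ s, (fun w : (EuclideanSpace ℝ (Fin d) × EuclideanSpace ℝ (Fin d)) × (Ωg × ΩQ × ΩC × ΩC) => ENNReal.ofReal (‖C ((η • G' t i w.1.1 w.2.1 + w.1.2) - Q (η • G' t i w.1.1 w.2.1 + w.1.2) w.2.2.1) w.2.2.2.1 + C (((η • G' t i w.1.1 w.2.1 + w.1.2) - Q (η • G' t i w.1.1 w.2.1 + w.1.2) w.2.2.1) - C ((η • G' t i w.1.1 w.2.1 + w.1.2) - Q (η • G' t i w.1.1 w.2.1 + w.1.2) w.2.2.1) w.2.2.2.1) w.2.2.2.2‖ ^ 2)) (z, s) ∂(νg.prod (νQ.prod (νC.prod νC)))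
          = ∫⁻ s1, ∫⁻ r, (fun w : (EuclideanSpace ℝ (Fin d) × EuclideanSpace ℝ (Fin d)) × (Ωg × ΩQ × ΩC × ΩC) => ENNReal.ofReal (‖C ((η • G' t i w.1.1 w.2.1 + w.1.2) - Q (η • G' t i w.1.1 w.2.1 + w.1.2) w.2.2.1) w.2.2.2.1 + C (((η • G' t i w.1.1 w.2.1 + w.1.2) - Q (η • G' t i w.1.1 w.2.1 + w.1.2) w.2.2.1) - C ((η • G' t i w.1.1 w.2.1 + w.1.2) - Q (η • G' t i w.1.1 w.2.1 + w.1.2) w.2.2.1) w.2.2.2.1) w.2.2.2.2‖ ^ 2)) (z, (s1, r)) ∂(νQ.prod (νC.prod νC)) ∂νg :=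
        lintegral_prod _ hs1.aemeasurable
      have e2 : ∀ s1 : Ωg, ∫⁻ r, (fun w : (EuclideanSpace ℝ (Fin d) × EuclideanSpace ℝ (Fin d)) × (Ωg × ΩQ × ΩC × ΩC) => ENNReal.ofReal (‖C ((η • G' t i w.1.1 w.2.1 + w.1.2) - Q (η • G' t i w.1.1 w.2.1 + w.1.2) w.2.2.1) w.2.2.2.1 + C (((η • G' t i w.1.1 w.2.1 + w.1.2) - Q (η • G' t i w.1.1 w.2.1 + w.1.2) w.2.2.1) - C ((η • G' t i w.1.1 w.2.1 + w.1.2) - Q (η • G' t i w.1.1 w.2.1 + w.1.2) w.2.2.1) w.2.2.2.1) w.2.2.2.2‖ ^ 2)) (z, (s1, r)) ∂(νQ.prod (νC.prod νC))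
          = ∫⁻ s2, ∫⁻ r2, (fun w : (EuclideanSpace ℝ (Fin d) × EuclideanSpace ℝ (Fin d)) × (Ωg × ΩQ × ΩC × ΩC) => ENNReal.ofReal (‖C ((η • G' t i w.1.1 w.2.1 + w.1.2) - Q (η • G' t i w.1.1 w.2.1 + w.1.2) w.2.2.1) w.2.2.2.1 + C (((η • G' t i w.1.1 w.2.1 + w.1.2) - Q (η • G' t i w.1.1 w.2.1 + w.1.2) w.2.2.1) - C ((η • G' t i w.1.1 w.2.1 + w.1.2) - Q (η • G' t i w.1.1 w.2.1 + w.1.2) w.2.2.1) w.2.2.2.1) w.2.2.2.2‖ ^ 2)) (z, (s1, (s2, r2))) ∂(νC.prod νC) ∂νQ := by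
        intro s1
        exact lintegral_prod _
          ((hΦm.comp (measurable_const.prodMk (measurable_const.prodMk measurable_id))).aemeasurable)
      have e3 : ∀ (s1 : Ωg) (s2 : ΩQ), ∫⁻ r2, (fun w : (EuclideanSpace ℝ (Fin d) × EuclideanSpace ℝ (Fin d)) × (Ωg × ΩQ × ΩC × ΩC) => ENNReal.ofReal (‖C ((η • G' t i w.1.1 w.2.1 + w.1.2) - Q (η • G' t i w.1.1 w.2.1 + w.1.2) w.2.2.1) w.2.2.2.1 + C (((η • G' t i w.1.1 w.2.1 + w.1.2) - Q (η • G' t i w.1.1 w.2.1 + w.1.2) w.2.2.1) - C ((η • G' t i w.1.1 w.2.1 + w.1.2) - Q (η • G' t i w.1.1 w.2.1 + w.1.2) w.2.2.1) w.2.2.2.1) w.2.2.2.2‖ ^ 2)) (z, (s1, (s2, r2))) ∂(νC.prod νC)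
          = ∫⁻ s3, ∫⁻ s4, (fun w : (EuclideanSpace ℝ (Fin d) × EuclideanSpace ℝ (Fin d)) × (Ωg × ΩQ × ΩC × ΩC) => ENNReal.ofReal (‖C ((η • G' t i w.1.1 w.2.1 + w.1.2) - Q (η • G' t i w.1.1 w.2.1 + w.1.2) w.2.2.1) w.2.2.2.1 + C (((η • G' t i w.1.1 w.2.1 + w.1.2) - Q (η • G' t i w.1.1 w.2.1 + w.1.2) w.2.2.1) - C ((η • G' t i w.1.1 w.2.1 + w.1.2) - Q (η • G' t i w.1.1 w.2.1 + w.1.2) w.2.2.1) w.2.2.2.1) w.2.2.2.2‖ ^ 2)) (z, (s1, (s2, (s3, s4)))) ∂νC ∂νC := by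
        intro s1 s2
        exact lintegral_prod _
          ((hΦm.comp (measurable_const.prodMk (measurable_const.prodMk
            (measurable_const.prodMk measurable_id)))).aemeasurable)
      calc ∫⁻ s, (fun w : (EuclideanSpace ℝ (Fin d) × EuclideanSpace ℝ (Fin d)) × (Ωg × ΩQ × ΩC × ΩC) => ENNReal.ofReal (‖C ((η • G' t i w.1.1 w.2.1 + w.1.2) - Q (η • G' t i w.1.1 w.2.1 + w.1.2) w.2.2.1) w.2.2.2.1 + C (((η • G' t i w.1.1 w.2.1 + w.1.2) - Q (η • G' t i w.1.1 w.2.1 + w.1.2) w.2.2.1) - C ((η • G' t i w.1.1 w.2.1 + w.1.2) - Q (η • G' t i w.1.1 w.2.1 + w.1.2) w.2.2.1) w.2.2.2.1) w.2.2.2.2‖ ^ 2)) (z, s) ∂(νg.prod (νQ.prod (νC.prod νC)))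
          = ∫⁻ s1, ∫⁻ s2, ∫⁻ s3, ∫⁻ s4, (fun w : (EuclideanSpace ℝ (Fin d) × EuclideanSpace ℝ (Fin d)) × (Ωg × ΩQ × ΩC × ΩC) => ENNReal.ofReal (‖C ((η • G' t i w.1.1 w.2.1 + w.1.2) - Q (η • G' t i w.1.1 w.2.1 + w.1.2) w.2.2.1) w.2.2.2.1 + C (((η • G' t i w.1.1 w.2.1 + w.1.2) - Q (η • G' t i w.1.1 w.2.1 + w.1.2) w.2.2.1) - C ((η • G' t i w.1.1 w.2.1 + w.1.2) - Q (η • G' t i w.1.1 w.2.1 + w.1.2) w.2.2.1) w.2.2.2.1) w.2.2.2.2‖ ^ 2)) (z, (s1, (s2, (s3, s4)))) ∂νC ∂νC ∂νQ ∂νg := by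
            rw [e1]
            exact lintegral_congr fun s1 => by
              rw [e2 s1]
              exact lintegral_congr fun s2 => e3 s1 s2
        _ ≤ ∫⁻ s1, ENNReal.ofReal ((1 + θ ^ 2) * δ)
              * ENNReal.ofReal (‖η • G' t i z.1 s1 + z.2‖ ^ 2) ∂νg :=
            lintegral_mono fun s1 => hIV (η • G' t i z.1 s1 + z.2)
        _ = ENNReal.ofReal ((1 + θ ^ 2) * δ)
              * ∫⁻ s1, ENNReal.ofReal (‖η • G' t i z.1 s1 + z.2‖ ^ 2) ∂νg :=
            lintegral_const_mul' _ _ ENNReal.ofReal_ne_top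
        _ ≤ ENNReal.ofReal (c / (1 + lam))
              * (ENNReal.ofReal ((1 + lam) * ‖z.2‖ ^ 2 + (1 + lam⁻¹) * (η ^ 2 * ‖gradient f z.1‖ ^ 2))
                + ENNReal.ofReal (η ^ 2 * σ ^ 2)) := by
            exact mul_le_mul' (ENNReal.ofReal_le_ofReal hcoef) (hV z)
        _ = ENNReal.ofReal ((c / (1 + lam)) * ((1 + lam) * ‖z.2‖ ^ 2 + (1 + lam⁻¹) * (η ^ 2 * ‖gradient f z.1‖ ^ 2)))
              + ENNReal.ofReal ((c / (1 + lam)) * (η ^ 2 * σ ^ 2)) := by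
            rw [mul_add, ← ENNReal.ofReal_mul hcl, ← ENNReal.ofReal_mul hcl]
        _ = ENNReal.ofReal (c * ‖z.2‖ ^ 2 + (c * η ^ 2 / lam) * ‖gradient f z.1‖ ^ 2 + (c / (1 + lam)) * (η ^ 2 * σ ^ 2)) := by
            have hnn1 : (0:ℝ) ≤ (1 + lam) * ‖z.2‖ ^ 2 + (1 + lam⁻¹) * (η ^ 2 * ‖gradient f z.1‖ ^ 2) := by
              have hil : (0:ℝ) ≤ lam⁻¹ := inv_nonneg.mpr hlam.le
              have := sq_nonneg ‖z.2‖
              have := sq_nonneg ‖gradient f z.1‖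
              have := sq_nonneg η
              positivity
            rw [← ENNReal.ofReal_add (mul_nonneg hcl hnn1) (mul_nonneg hcl (by positivity))]
            congr 1
            have hl0 : lam ≠ 0 := hlam.ne'
            have hl1 : (1:ℝ) + lam ≠ 0 := by positivity
            field_simp
            ring
    -- put everything together
    have hco : (0:ℝ) ≤ c * η ^ 2 / lam := div_nonneg (mul_nonneg hc.1.le (sq_nonneg η)) hlam.le
    have hm2 : Measurable (fun z : EuclideanSpace ℝ (Fin d) × EuclideanSpace ℝ (Fin d) => ENNReal.ofReal (c * ‖z.2‖ ^ 2)) :=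
      ((measurable_snd.norm.pow_const 2).const_mul c).ennreal_ofReal
    have hm3 : Measurable (fun z : EuclideanSpace ℝ (Fin d) × EuclideanSpace ℝ (Fin d) =>
        ENNReal.ofReal ((c * η ^ 2 / lam) * ‖gradient f z.1‖ ^ 2)) :=
      (((hgradmeas.comp measurable_fst).norm.pow_const 2).const_mul _).ennreal_ofReal
    have hterm1 : ∫⁻ z, ENNReal.ofReal (c * ‖z.2‖ ^ 2) ∂(μ.map (fun ω => (x t ω, et t i ω + q t i ω))) = ENNReal.ofReal c * A t i := by
      simp_rw [ENNReal.ofReal_mul hc.1.le]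
      rw [lintegral_const_mul' _ _ ENNReal.ofReal_ne_top]
      congr 1
      rw [lintegral_map ((measurable_snd.norm.pow_const 2).ennreal_ofReal) hhm]
    have hterm2 : ∫⁻ z, ENNReal.ofReal ((c * η ^ 2 / lam) * ‖gradient f z.1‖ ^ 2) ∂(μ.map (fun ω => (x t ω, et t i ω + q t i ω)))
        ≤ ENNReal.ofReal (c * η ^ 2 / lam) * ENNReal.ofReal (G ^ 2) := by
      simp_rw [ENNReal.ofReal_mul hco]
      rw [lintegral_const_mul' _ _ ENNReal.ofReal_ne_top]
      refine mul_le_mul_right ?_ _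
      rw [lintegral_map
        (f := fun z : EuclideanSpace ℝ (Fin d) × EuclideanSpace ℝ (Fin d) =>
          ENNReal.ofReal (‖gradient f z.1‖ ^ 2))
        (by exact (((hgradmeas.comp measurable_fst).norm.pow_const 2).ennreal_ofReal)) hhm]
      exact hgradG2
    have htail : ENNReal.ofReal (c * η ^ 2 / lam) * ENNReal.ofReal (G ^ 2)
          + ENNReal.ofReal ((c / (1 + lam)) * (η ^ 2 * σ ^ 2))
        ≤ ENNReal.ofReal ((c / lam) * η ^ 2 * (σ ^ 2 + G ^ 2)) := by
      rw [← ENNReal.ofReal_mul hco,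
        ← ENNReal.ofReal_add (mul_nonneg hco (sq_nonneg G)) (mul_nonneg hcl (by positivity))]
      apply ENNReal.ofReal_le_ofReal
      have hmono : c / (1 + lam) ≤ c / lam := by
        rw [div_le_div_iff₀ (by linarith) hlam]
        nlinarith [hc.1.le]
      have e1 : c / lam * η ^ 2 * (σ ^ 2 + G ^ 2)
          = c * η ^ 2 / lam * G ^ 2 + (c / lam) * (η ^ 2 * σ ^ 2) := by ring
      rw [e1]
      have h2 : (c / (1 + lam)) * (η ^ 2 * σ ^ 2) ≤ (c / lam) * (η ^ 2 * σ ^ 2) :=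
        mul_le_mul_of_nonneg_right hmono (by positivity)
      linarith
    calc A (t+1) i
        ≤ ∫⁻ z, ENNReal.ofReal (c * ‖z.2‖ ^ 2 + (c * η ^ 2 / lam) * ‖gradient f z.1‖ ^ 2 + (c / (1 + lam)) * (η ^ 2 * σ ^ 2)) ∂(μ.map (fun ω => (x t ω, et t i ω + q t i ω))) := by
          rw [hmaster]
          exact lintegral_mono hinner
      _ = ∫⁻ z, (ENNReal.ofReal (c * ‖z.2‖ ^ 2)
            + ENNReal.ofReal ((c * η ^ 2 / lam) * ‖gradient f z.1‖ ^ 2)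
            + ENNReal.ofReal ((c / (1 + lam)) * (η ^ 2 * σ ^ 2))) ∂(μ.map (fun ω => (x t ω, et t i ω + q t i ω))) :=
          lintegral_congr fun z => by
            rw [ENNReal.ofReal_add (add_nonneg (mul_nonneg hc.1.le (sq_nonneg _))
                (mul_nonneg hco (sq_nonneg _))) (mul_nonneg hcl (by positivity)),
              ENNReal.ofReal_add (mul_nonneg hc.1.le (sq_nonneg _)) (mul_nonneg hco (sq_nonneg _))]
      _ = (∫⁻ z, ENNReal.ofReal (c * ‖z.2‖ ^ 2) ∂(μ.map (fun ω => (x t ω, et t i ω + q t i ω))))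
            + (∫⁻ z, ENNReal.ofReal ((c * η ^ 2 / lam) * ‖gradient f z.1‖ ^ 2) ∂(μ.map (fun ω => (x t ω, et t i ω + q t i ω))))
            + ENNReal.ofReal ((c / (1 + lam)) * (η ^ 2 * σ ^ 2)) := by
          rw [lintegral_add_right _ measurable_const, lintegral_add_right _ hm3,
            lintegral_const, measure_univ, mul_one]
      _ ≤ ENNReal.ofReal c * A t i
            + ENNReal.ofReal (c * η ^ 2 / lam) * ENNReal.ofReal (G ^ 2)
            + ENNReal.ofReal ((c / (1 + lam)) * (η ^ 2 * σ ^ 2)) := by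
          rw [hterm1]
          exact add_le_add (add_le_add le_rfl hterm2) le_rfl
      _ ≤ ENNReal.ofReal c * A t i + ENNReal.ofReal ((c / lam) * η ^ 2 * (σ ^ 2 + G ^ 2)) := by
          rw [add_assoc]
          exact add_le_add le_rfl htail

  -- solve the recursion
  have h1c : (0:ℝ) < 1 - c := by linarith [hc.2]
  have hBc : (0:ℝ) ≤ c / ((1 - c) * lam) * η ^ 2 * (σ ^ 2 + G ^ 2) :=
    mul_nonneg (mul_nonneg (div_nonneg hc.1.le (mul_nonneg h1c.le hlam.le)) (sq_nonneg η))
      (by positivity)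
  have hKc : (0:ℝ) ≤ (c / lam) * η ^ 2 * (σ ^ 2 + G ^ 2) :=
    mul_nonneg (mul_nonneg (div_nonneg hc.1.le hlam.le) (sq_nonneg η)) (by positivity)
  have hAbound : ∀ t i, A t i ≤ ENNReal.ofReal (c / ((1 - c) * lam) * η ^ 2 * (σ ^ 2 + G ^ 2)) := by
    intro t
    induction t with
    | zero => intro i; rw [hA0 i]; positivity
    | succ t ih =>
      intro i
      refine le_trans (hstep t i) ?_
      calc ENNReal.ofReal c * A t i + ENNReal.ofReal ((c / lam) * η ^ 2 * (σ ^ 2 + G ^ 2))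
          ≤ ENNReal.ofReal c * ENNReal.ofReal (c / ((1 - c) * lam) * η ^ 2 * (σ ^ 2 + G ^ 2))
            + ENNReal.ofReal ((c / lam) * η ^ 2 * (σ ^ 2 + G ^ 2)) := by gcongr; exact ih i
        _ = ENNReal.ofReal (c * (c / ((1 - c) * lam) * η ^ 2 * (σ ^ 2 + G ^ 2))
            + (c / lam) * η ^ 2 * (σ ^ 2 + G ^ 2)) := by
            rw [← ENNReal.ofReal_mul hc.1.le, ← ENNReal.ofReal_add]
            · exact mul_nonneg hc.1.le hBc
            · exact hKc
        _ = ENNReal.ofReal (c / ((1 - c) * lam) * η ^ 2 * (σ ^ 2 + G ^ 2)) := by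
            congr 1
            have h1c : (1:ℝ) - c ≠ 0 := by intro h; nlinarith [hc.2]
            field_simp
            ring
  -- conclude
  intro t
  have hmi : ∀ i : Fin N, Measurable (fun ω => ENNReal.ofReal (‖et (t+1) i ω + q (t+1) i ω‖ ^ 2)) :=
    fun i => (((hetm (t+1) i).add (hqm (t+1) i)).norm.pow_const 2).ennreal_ofReal
  have hNpos : (0:ℝ) < (N:ℝ) := Nat.cast_pos.mpr hN
  simp_rw [nnnorm_sq_ofReal]
  have hpw : ∀ ω, ENNReal.ofReal (‖(N : ℝ)⁻¹ • ∑ i, (et (t+1) i ω + q (t+1) i ω)‖ ^ 2)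
      ≤ ((N:ℝ≥0∞))⁻¹ * ∑ i, ENNReal.ofReal (‖et (t+1) i ω + q (t+1) i ω‖ ^ 2) := by
    intro ω
    have h1 : ‖∑ i, (et (t+1) i ω + q (t+1) i ω)‖ ≤ ∑ i, ‖et (t+1) i ω + q (t+1) i ω‖ :=
      norm_sum_le _ _
    have h2 : (∑ i, ‖et (t+1) i ω + q (t+1) i ω‖) ^ 2
        ≤ (N:ℝ) * ∑ i, ‖et (t+1) i ω + q (t+1) i ω‖ ^ 2 := by
      have := sq_sum_le_card_mul_sum_sq
        (s := (Finset.univ : Finset (Fin N))) (f := fun i => ‖et (t+1) i ω + q (t+1) i ω‖)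
      simpa using this
    have h3 : ‖(N : ℝ)⁻¹ • ∑ i, (et (t+1) i ω + q (t+1) i ω)‖ ^ 2
        ≤ (N:ℝ)⁻¹ * ∑ i, ‖et (t+1) i ω + q (t+1) i ω‖ ^ 2 := by
      rw [norm_smul, Real.norm_eq_abs, abs_of_nonneg (inv_nonneg.mpr hNpos.le), mul_pow]
      have h4 : ‖∑ i, (et (t+1) i ω + q (t+1) i ω)‖ ^ 2
          ≤ (N:ℝ) * ∑ i, ‖et (t+1) i ω + q (t+1) i ω‖ ^ 2 :=
        le_trans (pow_le_pow_left₀ (norm_nonneg _) h1 2) h2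
      calc ((N:ℝ)⁻¹) ^ 2 * ‖∑ i, (et (t+1) i ω + q (t+1) i ω)‖ ^ 2
          ≤ ((N:ℝ)⁻¹) ^ 2 * ((N:ℝ) * ∑ i, ‖et (t+1) i ω + q (t+1) i ω‖ ^ 2) := by
            exact mul_le_mul_of_nonneg_left h4 (by positivity)
        _ = (N:ℝ)⁻¹ * ∑ i, ‖et (t+1) i ω + q (t+1) i ω‖ ^ 2 := by
            field_simp
    calc ENNReal.ofReal (‖(N : ℝ)⁻¹ • ∑ i, (et (t+1) i ω + q (t+1) i ω)‖ ^ 2)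
        ≤ ENNReal.ofReal ((N:ℝ)⁻¹ * ∑ i, ‖et (t+1) i ω + q (t+1) i ω‖ ^ 2) :=
          ENNReal.ofReal_le_ofReal h3
      _ = ENNReal.ofReal ((N:ℝ)⁻¹) * ENNReal.ofReal (∑ i, ‖et (t+1) i ω + q (t+1) i ω‖ ^ 2) :=
          ENNReal.ofReal_mul (inv_nonneg.mpr hNpos.le)
      _ = ((N:ℝ≥0∞))⁻¹ * ∑ i, ENNReal.ofReal (‖et (t+1) i ω + q (t+1) i ω‖ ^ 2) := by
          rw [ENNReal.ofReal_inv_of_pos hNpos, ENNReal.ofReal_natCast,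
            ENNReal.ofReal_sum_of_nonneg (fun i _ => sq_nonneg _)]
  calc ∫⁻ ω, ENNReal.ofReal (‖(N : ℝ)⁻¹ • ∑ i, (et (t+1) i ω + q (t+1) i ω)‖ ^ 2) ∂μ
      ≤ ∫⁻ ω, ((N:ℝ≥0∞))⁻¹ * ∑ i, ENNReal.ofReal (‖et (t+1) i ω + q (t+1) i ω‖ ^ 2) ∂μ :=
        lintegral_mono hpw
    _ = ((N:ℝ≥0∞))⁻¹ * ∑ i, A (t+1) i := by
        rw [lintegral_const_mul' _ _ (by simp [hN.ne'] : ((N:ℝ≥0∞))⁻¹ ≠ ⊤),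
          lintegral_finset_sum _ (fun i _ => hmi i)]
    _ ≤ ((N:ℝ≥0∞))⁻¹ * ∑ _i : Fin N,
          ENNReal.ofReal (c / ((1 - c) * lam) * η ^ 2 * (σ ^ 2 + G ^ 2)) := by
        gcongr with i
        exact hAbound (t+1) i
    _ = ENNReal.ofReal (c / ((1 - c) * lam) * η ^ 2 * (σ ^ 2 + G ^ 2)) := by
        rw [Finset.sum_const, Finset.card_univ, Fintype.card_fin, nsmul_eq_mul, ← mul_assoc,
          ENNReal.inv_mul_cancel (Nat.cast_ne_zero.mpr hN.ne' : ((N:ℝ≥0∞)) ≠ 0)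
            (by simp : ((N:ℝ≥0∞)) ≠ ⊤), one_mul]
    _ = ENNReal.ofReal (c / ((1 - c) * lam) * η ^ 2 * (σ ^ 2 + G ^ 2)) := rfl
end
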